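/- arXiv:2105.11700 — 7 statements merged into one kernel-verified Lean document; each statement's English description precedes it below -/
import Mathlib

section
/- Let λ be a strong limit cardinal with λ > ℵ₀ and let μ > λ be a regular cardinal. Then every ⊆*-increasing sequence ⟨D_α : α < μ⟩ of subsets of λ stabilizes modulo finite: there exists α* < μ such that for every α with α* ≤ α < μ, the symmetric difference D_α △ D_{α*} is finite (i.e. D_α =* D_{α*}). -/
open Cardinal Set

universe u

/-- In the order type of a regular cardinal, every small family has a strict upper bound. -/
lemma exists_strict_ub {mu : Cardinal.{u}} (hmu : mu.IsRegular) {ι : Type u} (hι : #ι < mu)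
    (f : ι → mu.ord.ToType) : ∃ b : mu.ord.ToType, ∀ i, f i < b := by
  have hlim : Order.IsSuccLimit mu.ord := Cardinal.isSuccLimit_ord hmu.aleph0_le
  let e := (Ordinal.ToType.mk (o := mu.ord))
  have hg : ∀ i, Order.succ ((e.symm (f i) : Set.Iio mu.ord) : Ordinal) < mu.ord := fun i =>
    hlim.succ_lt (e.symm (f i)).2
  have hsup : (⨆ i, Order.succ ((e.symm (f i) : Set.Iio mu.ord) : Ordinal)) < mu.ord :=
    Ordinal.iSup_lt_ord (by rwa [hmu.cof_eq]) hg
  refine ⟨e ⟨_, hsup⟩, fun i => ?_⟩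
  have h1 : ((e.symm (f i) : Set.Iio mu.ord) : Ordinal) < ⨆ i,
      Order.succ ((e.symm (f i) : Set.Iio mu.ord) : Ordinal) :=
    lt_of_lt_of_le (Order.lt_succ _) (Ordinal.le_iSup _ i)
  have h2 : e.symm (f i) < ⟨_, hsup⟩ := Subtype.coe_lt_coe.mp h1
  refine e.symm.lt_iff_lt.mp ?_
  rwa [e.symm_apply_apply]

/-- A set all of whose initial segments are finite is countable. -/
lemma countable_of_initSeg_finite {α : Type*} [LinearOrder α] {X : Set α}
    (h : ∀ a : α, (X ∩ {x | x < a}).Finite) : X.Countable := by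
  rw [Set.countable_iff_exists_injective]
  refine ⟨fun x => (h x).toFinset.card, ?_⟩
  have key : ∀ x y : X, (x : α) < y → (h (x : α)).toFinset.card < (h (y : α)).toFinset.card := by
    intro x y hxy
    apply Finset.card_lt_card
    rw [Finset.ssubset_iff_of_subset]
    · exact ⟨x, by simp [x.2, hxy], by simp⟩
    · intro z hz
      simp only [Set.Finite.mem_toFinset, Set.mem_inter_iff, Set.mem_setOf_eq] at hz ⊢
      exact ⟨hz.1, hz.2.trans hxy⟩
  intro x y hxy
  rcases lt_trichotomy (x : α) (y : α) with h1 | h1 | h1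
  · exact absurd hxy (ne_of_lt (key x y h1))
  · exact Subtype.ext h1
  · exact absurd hxy.symm (ne_of_lt (key y x h1))

/-- **Stabilization modulo finite.** If `lam` is a strong limit cardinal with `lam > ℵ₀`
and `mu > lam` is regular, then every `⊆*`-increasing sequence `⟨D α : α < mu⟩` of subsets
of `lam` stabilizes modulo finite. -/
theorem stabilization_mod_finite
    (lam mu : Cardinal) (hlam : ℵ₀ < lam) (hsl : lam.IsStrongLimit)
    (hmu : mu.IsRegular) (hlm : lam < mu)
    (D : mu.ord.ToType → Set lam.ord.ToType)
    (hinc : ∀ a b : mu.ord.ToType, a < b → (D a \ D b).Finite) :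
    ∃ astar : mu.ord.ToType, ∀ a : mu.ord.ToType, astar ≤ a →
      ((D a \ D astar) ∪ (D astar \ D a)).Finite := by
  classical
  by_contra hcon
  push_neg at hcon
  have hnb : Nonempty mu.ord.ToType := by
    rw [Ordinal.toType_nonempty_iff_ne_zero]
    have : (0 : Ordinal) < mu.ord := Cardinal.lt_ord.mpr (by simpa using hmu.pos)
    exact this.ne'
  have hpunit : #PUnit.{u_1 + 1} < mu := by
    simpa using (Cardinal.one_lt_aleph0.trans_le hmu.aleph0_le)
  -- non-stabilization: above every index there is one with infinitely many new elements
  have nonstab : ∀ s : mu.ord.ToType, ∃ a, s < a ∧ (D a \ D s).Infinite := by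
    intro s
    obtain ⟨a, hsa, hinf⟩ := hcon s
    have hne : s ≠ a := by rintro rfl; exact hinf (by simp)
    have hlt : s < a := lt_of_le_of_ne hsa hne
    exact ⟨a, hlt, fun hfin => hinf (hfin.union (hinc s a hlt))⟩
  -- Step 1: stabilization below every ν < lam
  have perν : ∀ ν : lam.ord.ToType, ∃ i₀ : mu.ord.ToType, ∀ i j, i₀ < i → i₀ < j →
      ((D i \ D j) ∩ {x | x < ν}).Finite := by
    intro ν
    have h1 : #{x : lam.ord.ToType // x < ν} < lam := by
      have h := Ordinal.typein_lt_self ν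
      exact Cardinal.lt_ord.mp h
    have hPcard : #(Set {x : lam.ord.ToType // x < ν}) < mu := by
      rw [Cardinal.mk_set]
      exact (hsl.two_power_lt h1).trans hlm
    set V : mu.ord.ToType → Set {x : lam.ord.ToType // x < ν} :=
      fun i => {x | (x : lam.ord.ToType) ∈ D i} with hV
    set g : Set {x : lam.ord.ToType // x < ν} → mu.ord.ToType :=
      fun v => if h : ∃ b, ∀ i, V i = v → i ≤ b then h.choose else Classical.arbitrary _ with hgdef
    obtain ⟨i₀, hi₀⟩ := exists_strict_ub hmu hPcard g
    have hrec : ∀ i, i₀ < i → ∀ c, ∃ k, c ≤ k ∧ V k = V i := by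
      intro i hi c
      by_contra hb
      push_neg at hb
      have hbd : ∃ b, ∀ k, V k = V i → k ≤ b := by
        refine ⟨c, fun k hk => ?_⟩
        by_contra hck
        exact hb k (le_of_not_ge hck) hk
      have hgi : ∀ k, V k = V i → k ≤ g (V i) := by
        simp only [hgdef]
        rw [dif_pos hbd]
        exact hbd.choose_spec
      exact absurd (((hgi i rfl).trans_lt (hi₀ (V i))).trans hi) (lt_irrefl i)
    refine ⟨i₀, fun i j hi hj => ?_⟩
    obtain ⟨m, hm⟩ := exists_strict_ub hmu hpunit (fun _ : PUnit => max i j)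
    obtain ⟨k, hmk, hVk⟩ := hrec j hj m
    have hik : i < k := lt_of_le_of_lt (le_max_left i j) ((hm PUnit.unit).trans_le hmk)
    refine (hinc i k hik).subset ?_
    rintro x ⟨⟨hxi, hxj⟩, hxν⟩
    refine ⟨hxi, fun hxk => hxj ?_⟩
    have hmem : (⟨x, hxν⟩ : {x : lam.ord.ToType // x < ν}) ∈ V k := hxk
    rw [hVk] at hmem
    exact hmem
  choose i₀f hi₀f using perν
  have hLcard : #lam.ord.ToType < mu := by
    rw [Cardinal.mk_toType, Cardinal.card_ord]; exact hlm
  obtain ⟨istar, histar⟩ := exists_strict_ub hmu hLcard i₀f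
  have ctble : ∀ i j, istar ≤ i → istar ≤ j → (D i \ D j).Countable := by
    intro i j hi hj
    apply countable_of_initSeg_finite
    intro a
    exact hi₀f a i j ((histar a).trans_le hi) ((histar a).trans_le hj)
  -- Step 2: build a strictly ⊆*-increasing chain of length (2^ℵ₀)⁺ + 1
  set θ : Cardinal := Order.succ (2 ^ ℵ₀) with hθdef
  have hθmu : θ < mu := (Order.succ_le_of_lt (hsl.two_power_lt hlam)).trans_lt hlm
  set I : Ordinal → mu.ord.ToType := WellFounded.fix wellFounded_lt
    (fun ζ prev => if h : ∃ b, istar < b ∧ ∀ ξ (hξ : ξ < ζ),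
        prev ξ hξ < b ∧ (D b \ D (prev ξ hξ)).Infinite
      then h.choose else Classical.arbitrary _) with hIdef
  have hIeq : ∀ ζ : Ordinal, I ζ = if h : ∃ b, istar < b ∧ ∀ ξ (_ : ξ < ζ),
      I ξ < b ∧ (D b \ D (I ξ)).Infinite then h.choose else Classical.arbitrary _ := by
    intro ζ
    rw [hIdef]
    exact WellFounded.fix_eq _ _ _
  have hex : ∀ ζ : Ordinal, ζ.card < mu →
      ∃ b, istar < b ∧ ∀ ξ (_ : ξ < ζ), I ξ < b ∧ (D b \ D (I ξ)).Infinite := by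
    intro ζ hζ
    have hcard : #ζ.ToType < mu := by rwa [Cardinal.mk_toType]
    obtain ⟨u, hu⟩ := exists_strict_ub hmu hcard
      (fun x => I (((Ordinal.ToType.mk (o := ζ)).symm x : Set.Iio ζ) : Ordinal))
    obtain ⟨w, hw⟩ := exists_strict_ub hmu hpunit (fun _ : PUnit => max u istar)
    obtain ⟨a, haw, hainf⟩ := nonstab w
    have hIltw : ∀ ξ (hξ : ξ < ζ), I ξ < w := by
      intro ξ hξ
      have h1 := hu ((Ordinal.ToType.mk (o := ζ)) ⟨ξ, hξ⟩)
      rw [OrderIso.symm_apply_apply] at h1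
      exact h1.trans ((le_max_left u istar).trans_lt (hw PUnit.unit))
    refine ⟨a, ((le_max_right u istar).trans_lt (hw PUnit.unit)).trans haw, fun ξ hξ => ?_⟩
    have hIw : I ξ < w := hIltw ξ hξ
    refine ⟨hIw.trans haw, ?_⟩
    have hsub : (D a \ D w) \ (D (I ξ) \ D w) ⊆ D a \ D (I ξ) := by
      rintro x ⟨⟨hxa, hxw⟩, hx2⟩
      exact ⟨hxa, fun hxi => hx2 ⟨hxi, hxw⟩⟩
    exact (hainf.diff (hinc _ _ hIw)).mono hsub
  have hgood : ∀ ζ : Ordinal, ζ.card < mu →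
      istar < I ζ ∧ ∀ ξ (_ : ξ < ζ), I ξ < I ζ ∧ (D (I ζ) \ D (I ξ)).Infinite := by
    intro ζ hζ
    have h := hex ζ hζ
    rw [hIeq ζ, dif_pos h]
    exact h.choose_spec
  have hcards : ∀ ζ : Ordinal, ζ ≤ θ.ord → ζ.card < mu := by
    intro ζ hζ
    exact lt_of_le_of_lt (by simpa [Cardinal.card_ord] using Ordinal.card_le_card hζ) hθmu
  obtain ⟨hT1, hT2⟩ := hgood θ.ord (hcards _ le_rfl)
  set T := I θ.ord with hTdef
  set E : Set lam.ord.ToType := D T \ D istar with hEdef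
  have hEc : E.Countable := ctble T istar hT1.le le_rfl
  -- the injection witnessing θ ≤ 2 ^ ℵ₀
  set f : θ.ord.ToType → Set ↥E := fun x =>
    {y : ↥E | (y : lam.ord.ToType) ∈
      D (I (((Ordinal.ToType.mk (o := θ.ord)).symm x : Set.Iio θ.ord) : Ordinal))} with hfdef
  have haux : ∀ ξ ζ : Ordinal, ξ < ζ → ζ < θ.ord →
      ∃ y : ↥E, (y : lam.ord.ToType) ∈ D (I ζ) ∧ (y : lam.ord.ToType) ∉ D (I ξ) := by
    intro ξ ζ hξζ hζθ
    obtain ⟨hζ1, hζ2⟩ := hgood ζ (hcards _ hζθ.le)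
    obtain ⟨hξ1, _⟩ := hgood ξ (hcards _ (hξζ.trans hζθ).le)
    obtain ⟨hIζT, _⟩ := hT2 ζ hζθ
    obtain ⟨hIξζ, hinfζξ⟩ := hζ2 ξ hξζ
    have hW : ((D (I ζ) \ D (I ξ)) \ ((D (I ζ) \ D T) ∪ (D istar \ D (I ξ)))).Infinite :=
      hinfζξ.diff ((hinc _ _ hIζT).union (hinc _ _ hξ1))
    obtain ⟨x, ⟨⟨hx1, hx2⟩, hx3⟩⟩ := hW.nonempty
    rw [Set.mem_union, not_or] at hx3
    have hxT : x ∈ D T := by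
      by_contra hc; exact hx3.1 ⟨hx1, hc⟩
    have hxs : x ∉ D istar := by
      intro hc; exact hx3.2 ⟨hc, hx2⟩
    exact ⟨⟨x, hxT, hxs⟩, hx1, hx2⟩
  have hfinj : Function.Injective f := by
    have key : ∀ x x' : θ.ord.ToType,
        (((Ordinal.ToType.mk (o := θ.ord)).symm x' : Set.Iio θ.ord) : Ordinal) <
        (((Ordinal.ToType.mk (o := θ.ord)).symm x : Set.Iio θ.ord) : Ordinal) → f x ≠ f x' := by
      intro x x' hlt heq
      obtain ⟨y, hy1, hy2⟩ := haux _ _ hlt ((Ordinal.ToType.mk (o := θ.ord)).symm x).2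
      have : y ∈ f x := hy1
      rw [heq] at this
      exact hy2 this
    intro x x' heq
    by_contra hne
    have hne' : (((Ordinal.ToType.mk (o := θ.ord)).symm x : Set.Iio θ.ord) : Ordinal) ≠
        (((Ordinal.ToType.mk (o := θ.ord)).symm x' : Set.Iio θ.ord) : Ordinal) := by
      intro h
      exact hne ((Ordinal.ToType.mk (o := θ.ord)).symm.injective (Subtype.ext h) |>.symm ▸ rfl)
    rcases hne'.lt_or_gt with h | h
    · exact key x' x h heq.symm
    · exact key x x' h heq
  have hle : θ ≤ 2 ^ ℵ₀ := by
    have h1 : #θ.ord.ToType ≤ #(Set ↥E) := Cardinal.mk_le_of_injective hfinj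
    rw [Cardinal.mk_toType, Cardinal.card_ord, Cardinal.mk_set] at h1
    refine h1.trans (Cardinal.power_le_power_left two_ne_zero ?_)
    rw [Cardinal.mk_le_aleph0_iff, ← Set.countable_coe_iff] at *
    exact hEc
  exact absurd hle (not_le.mpr (Order.lt_succ _))
end

section
/- Let α be an uncountable cardinal, let ρ ≤ α be an ordinal, and let ⟨W_j : j < ρ⟩ be a sequence of pairwise distinct normal ultrafilters on α. Then there exist pairwise disjoint sets ⟨Z_j : j < ρ⟩ such that Z_j ∈ W_j for every j < ρ. -/
open Cardinal Set

/-- A normal ultrafilter on an uncountable cardinal `θ`, presented as an ultrafilter on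
`Ordinal` concentrating on the ordinals below `θ`: it is nonprincipal, `θ`-complete
(closed under intersections of fewer than `θ` members) and closed under diagonal
intersections. -/
def IsNormalUltrafilterOn (θ : Cardinal) (U : Ultrafilter Ordinal) : Prop :=
  Set.Iio θ.ord ∈ U ∧
  (∀ x : Ordinal, ({x} : Set Ordinal)ᶜ ∈ U) ∧
  (∀ β : Ordinal, β < θ.ord → ∀ A : Ordinal → Set Ordinal,
    (∀ ξ, ξ < β → A ξ ∈ U) → (⋂ ξ ∈ Set.Iio β, A ξ) ∈ U) ∧
  (∀ A : Ordinal → Set Ordinal, (∀ ξ, ξ < θ.ord → A ξ ∈ U) →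
    {b : Ordinal | b < θ.ord ∧ ∀ ξ, ξ < b → b ∈ A ξ} ∈ U)

/-- Pairwise distinct normal ultrafilters `⟨W j : j < ρ⟩` on an uncountable cardinal `α`,
where `ρ ≤ α`, can be separated by pairwise disjoint sets `Z j ∈ W j`. -/
theorem separate_normal_ultrafilters
    (α : Cardinal) (hα : ℵ₀ < α) (ρ : Ordinal) (hρ : ρ ≤ α.ord)
    (W : Ordinal → Ultrafilter Ordinal)
    (hW : ∀ j, j < ρ → IsNormalUltrafilterOn α (W j))
    (hdist : ∀ i j, i < ρ → j < ρ → i ≠ j → W i ≠ W j) :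
    ∃ Z : Ordinal → Set Ordinal,
      (∀ j, j < ρ → Z j ∈ W j) ∧
      (∀ i j, i < ρ → j < ρ → i ≠ j → Disjoint (Z i) (Z j)) := by
  classical
  -- For every pair of distinct indices, pick a set in `W i` whose complement is in `W j`.
  have hsep : ∀ i j : Ordinal, ∃ S : Set Ordinal,
      i < ρ → j < ρ → i ≠ j → S ∈ W i ∧ Sᶜ ∈ W j := by
    intro i j
    by_cases h : i < ρ ∧ j < ρ ∧ i ≠ j
    · obtain ⟨hi, hj, hij⟩ := h
      have hne := hdist i j hi hj hij
      by_contra hc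
      push_neg at hc
      have hSj : ∀ S : Set Ordinal, S ∈ W i → Sᶜ ∉ W j := fun S => (hc S).2.2.2
      apply hne
      ext s
      constructor
      · intro hs
        by_contra hs'
        exact hSj s hs (Ultrafilter.compl_mem_iff_notMem.mpr hs')
      · intro hs
        by_contra hs'
        have hcs : sᶜ ∈ W i := Ultrafilter.compl_mem_iff_notMem.mpr hs'
        have := hSj sᶜ hcs
        rw [compl_compl] at this
        exact this hs
    · push_neg at h
      exact ⟨∅, fun hi hj hij => absurd (h hi hj) hij⟩
  choose S hS using hsep
  -- the separating family for the diagonal intersection at index `j`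
  set A : Ordinal → Ordinal → Set Ordinal := fun j ξ =>
    if ξ < j then (S ξ j)ᶜ else if j < ξ ∧ ξ < ρ then S j ξ else Set.univ with hA
  have hAmem : ∀ j, j < ρ → ∀ ξ, A j ξ ∈ W j := by
    intro j hj ξ
    simp only [hA]
    split_ifs with h1 h2
    · exact (hS ξ j (h1.trans hj) hj (ne_of_lt h1)).2
    · exact (hS j ξ hj h2.2 (ne_of_lt h2.1)).1
    · exact Filter.univ_mem
  have hlim : Order.IsSuccLimit (Cardinal.ord α) := Cardinal.isSuccLimit_ord hα.le
  set Z : Ordinal → Set Ordinal := fun j =>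
    {b : Ordinal | b < α.ord ∧ ∀ ξ, ξ < b → b ∈ A j ξ} ∩ Set.Ioi j with hZ
  have hZmem : ∀ j, j < ρ → Z j ∈ W j := by
    intro j hj
    obtain ⟨h1, h2, h3, h4⟩ := hW j hj
    have hdiag : {b : Ordinal | b < α.ord ∧ ∀ ξ, ξ < b → b ∈ A j ξ} ∈ W j :=
      h4 (A j) (fun ξ _ => hAmem j hj ξ)
    have hjs : j + 1 < α.ord := by
      rw [Ordinal.add_one_eq_succ]; exact hlim.succ_lt (lt_of_lt_of_le hj hρ)
    have hIoi : Set.Ioi j ∈ W j := by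
      have := h3 (j + 1) hjs (fun ξ => ({ξ} : Set Ordinal)ᶜ) (fun ξ _ => h2 ξ)
      refine Filter.mem_of_superset this ?_
      intro b hb
      simp only [Set.mem_iInter, Set.mem_compl_iff, Set.mem_singleton_iff,
        Set.mem_Iio] at hb
      simp only [Set.mem_Ioi]
      by_contra hble
      exact hb b (by
        rw [Ordinal.add_one_eq_succ, Order.lt_succ_iff]
        exact not_lt.mp hble) rfl
    exact Filter.inter_mem hdiag hIoi
  refine ⟨Z, hZmem, ?_⟩
  -- key disjointness lemma for `i < j`
  have key : ∀ i j : Ordinal, i < ρ → j < ρ → i < j → ∀ x, x ∈ Z i → x ∈ Z j → False := by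
    intro i j hi hj hij x hxi hxj
    obtain ⟨⟨_, hxi2⟩, hxi3⟩ := hxi
    obtain ⟨⟨_, hxj2⟩, hxj3⟩ := hxj
    have hix : i < x := hij.trans hxj3
    have hx1 : x ∈ A j i := hxj2 i hix
    have hx2 : x ∈ A i j := hxi2 j hxj3
    simp only [hA, if_pos hij] at hx1
    simp only [hA, if_neg (lt_asymm hij),
      if_pos (show i < j ∧ j < ρ from ⟨hij, hj⟩)] at hx2
    exact hx1 hx2
  intro i j hi hj hij
  rcases lt_or_gt_of_ne hij with h | h
  · exact Set.disjoint_left.mpr fun x hxi hxj => key i j hi hj h x hxi hxj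
  · exact Set.disjoint_left.mpr fun x hxi hxj => key j i hj hi h x hxj hxi
end

section
/- Suppose κ is a regular uncountable cardinal with 2^{<κ} = κ, and F is a P-point filter on κ. Let ⟨X_i : i < κ⁺⟩ be a sequence of members of F and let ⟨Z_i : i < κ⁺⟩ be any sequence of subsets of κ. Then there is a set Y ⊆ κ⁺ of cardinality κ such that: (1) ⋂_{i∈Y} X_i ∈ F; and (2) there is α < κ⁺ with α ∉ Y such that [Z_α]^{<ω} ⊆ ⋃_{i∈Y} [Z_i]^{<ω}, i.e. every finite subset of Z_α is a finite subset of Z_i for some i ∈ Y. -/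
open Cardinal Set

/-- `F` is a P-point filter on `κ` (identified with the ordinals below `κ`) with witnessing
function `π`: `F` is uniform (every member has cardinality `κ`), `κ`-complete, `π` is almost
one-to-one on a member of `F`, and `F` is closed under the `π`-diagonal intersections
`Δ*_{i<κ} A i = {ν : ν ∈ A i for all i < π ν}`. -/
def IsPPointFilter (κ : Cardinal) (F : Filter κ.ord.ToType)
    (π : κ.ord.ToType → κ.ord.ToType) : Prop :=
  (∀ A ∈ F, #↥A = κ) ∧
  (∀ (ι : Type) (A : ι → Set κ.ord.ToType), #ι < κ →
      (∀ i, A i ∈ F) → (⋂ i, A i) ∈ F) ∧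
  (∃ X ∈ F, ∀ a : κ.ord.ToType, #↥{ν | ν ∈ X ∧ π ν = a} < κ) ∧
  (∀ A : κ.ord.ToType → Set κ.ord.ToType, (∀ i, A i ∈ F) →
      {ν | ∀ i, i < π ν → ν ∈ A i} ∈ F)

/-- **Generalized Galvin property for P-point filters.** If `κ` is regular uncountable with
`2^{<κ} = κ` and `F` is a P-point filter on `κ`, then for every sequence `⟨X i : i < κ⁺⟩`
of members of `F` and every sequence `⟨Z i : i < κ⁺⟩` of subsets of `κ` there is
`Y ⊆ κ⁺` of cardinality `κ` with `⋂_{i ∈ Y} X i ∈ F`, and some `α ∉ Y` such that every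
finite subset of `Z α` is contained in `Z i` for some `i ∈ Y`. -/
theorem pPoint_generalized_galvin
    (κ : Cardinal) (hreg : κ.IsRegular) (hκ : ℵ₀ < κ)
    (h2 : ∀ ν : Cardinal, ν < κ → (2 : Cardinal) ^ ν ≤ κ)
    (F : Filter κ.ord.ToType) (π : κ.ord.ToType → κ.ord.ToType)
    (hpp : IsPPointFilter κ F π)
    (X Z : (Order.succ κ).ord.ToType → Set κ.ord.ToType)
    (hX : ∀ i, X i ∈ F) :
    ∃ Y : Set ((Order.succ κ).ord.ToType), #↥Y = κ ∧
      (⋂ i ∈ Y, X i) ∈ F ∧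
      ∃ α, α ∉ Y ∧ ∀ s : Set κ.ord.ToType, s.Finite → s ⊆ Z α →
        ∃ i ∈ Y, s ⊆ Z i := by
  classical
  obtain ⟨huni, hcomp, ⟨Xw, hXwF, hXw⟩, hdiag⟩ := hpp
  have hκ0 : ℵ₀ ≤ κ := hκ.le
  have h1κ : (1 : Cardinal) < κ := one_lt_aleph0.trans hκ
  have hTcard : #κ.ord.ToType = κ := by rw [Cardinal.mk_toType, Cardinal.card_ord]
  have hTscard : #(Order.succ κ).ord.ToType = Order.succ κ := by rw [Cardinal.mk_toType, Cardinal.card_ord]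
  -- cardinality of initial segments of T
  have hIic : ∀ ξ : κ.ord.ToType, #(Set.Iic ξ) < κ := by
    intro ξ
    have he : Set.Iic ξ = insert ξ (Set.Iio ξ) := by
      ext x; simp [le_iff_lt_or_eq, or_comm]
    rw [he]
    exact lt_of_le_of_lt Cardinal.mk_insert_le
      (Cardinal.add_lt_of_lt hκ0 (Cardinal.mk_Iio_ord_toType ξ) h1κ)
  -- the small sets on which traces are taken
  set D : κ.ord.ToType → Set κ.ord.ToType := fun ξ => {ν | ν ∈ Xw ∧ π ν ≤ ξ} ∪ Set.Iic ξ with hDdef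
  have hDlt : ∀ ξ : κ.ord.ToType, #(D ξ) < κ := by
    intro ξ
    have hsub : {ν | ν ∈ Xw ∧ π ν ≤ ξ} ⊆ ⋃ a : Set.Iic ξ, {ν | ν ∈ Xw ∧ π ν = a.1} := by
      intro ν hν
      exact Set.mem_iUnion.2 ⟨⟨π ν, hν.2⟩, hν.1, rfl⟩
    have h1 : #{ν : κ.ord.ToType | ν ∈ Xw ∧ π ν ≤ ξ} < κ := by
      refine lt_of_le_of_lt (Cardinal.mk_le_mk_of_subset hsub) ?_
      refine lt_of_le_of_lt (Cardinal.mk_iUnion_le _) ?_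
      exact Cardinal.mul_lt_of_lt hκ0 (hIic ξ)
        (Cardinal.iSup_lt_of_isRegular hreg (hIic ξ) fun a => hXw a.1)
    exact lt_of_le_of_lt (Cardinal.mk_union_le _ _)
      (Cardinal.add_lt_of_lt hκ0 h1 (hIic ξ))
  -- traces
  set t : ∀ ξ : κ.ord.ToType, (Order.succ κ).ord.ToType → Set (D ξ) × Set (D ξ) :=
    fun ξ j => (Subtype.val ⁻¹' X j, Subtype.val ⁻¹' Z j) with htdef
  have hV : ∀ ξ : κ.ord.ToType, #(Set (D ξ) × Set (D ξ)) ≤ κ := by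
    intro ξ
    have h2μ : (2 : Cardinal) ^ #(D ξ) ≤ κ := h2 _ (hDlt ξ)
    calc #(Set (D ξ) × Set (D ξ)) = #(Set (D ξ)) * #(Set (D ξ)) := by
          simp [Cardinal.mk_prod]
      _ = 2 ^ #(D ξ) * 2 ^ #(D ξ) := by rw [Cardinal.mk_set]
      _ ≤ κ * κ := mul_le_mul' h2μ h2μ
      _ = κ := Cardinal.mul_eq_self hκ0
  set K : κ.ord.ToType → (Order.succ κ).ord.ToType → Set (Order.succ κ).ord.ToType := fun ξ a => {j | t ξ j = t ξ a} with hKdef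
  -- bad indices are few
  have hSle : ∀ ξ : κ.ord.ToType, #{a : (Order.succ κ).ord.ToType | #(K ξ a) ≤ κ} ≤ κ := by
    intro ξ
    have hsub : {a : (Order.succ κ).ord.ToType | #(K ξ a) ≤ κ} ⊆
        ⋃ v : Set (D ξ) × Set (D ξ), {a : (Order.succ κ).ord.ToType | t ξ a = v ∧ #{j : (Order.succ κ).ord.ToType | t ξ j = v} ≤ κ} := by
      intro a ha
      exact Set.mem_iUnion.2 ⟨t ξ a, rfl, ha⟩
    refine le_trans (Cardinal.mk_le_mk_of_subset hsub) ?_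
    refine le_trans (Cardinal.mk_iUnion_le _) ?_
    have hpiece : ∀ v : Set (D ξ) × Set (D ξ),
        #{a : (Order.succ κ).ord.ToType | t ξ a = v ∧ #{j : (Order.succ κ).ord.ToType | t ξ j = v} ≤ κ} ≤ κ := by
      intro v
      rcases Set.eq_empty_or_nonempty {a : (Order.succ κ).ord.ToType | t ξ a = v ∧ #{j : (Order.succ κ).ord.ToType | t ξ j = v} ≤ κ} with he | hne
      · rw [he]; simp
      · obtain ⟨a₀, ha₀⟩ := hne
        refine le_trans (Cardinal.mk_le_mk_of_subset ?_) ha₀.2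
        intro a ha; exact ha.1
    calc #(Set (D ξ) × Set (D ξ)) * ⨆ v, #{a : (Order.succ κ).ord.ToType | t ξ a = v ∧ #{j : (Order.succ κ).ord.ToType | t ξ j = v} ≤ κ}
        ≤ κ * κ := mul_le_mul' (hV ξ) (ciSup_le' hpiece)
      _ = κ := Cardinal.mul_eq_self hκ0
  have hbad : #{a : (Order.succ κ).ord.ToType | ¬ ∀ ξ : κ.ord.ToType, κ < #(K ξ a)} ≤ κ := by
    have hsub : {a : (Order.succ κ).ord.ToType | ¬ ∀ ξ : κ.ord.ToType, κ < #(K ξ a)} ⊆ ⋃ ξ : κ.ord.ToType, {a : (Order.succ κ).ord.ToType | #(K ξ a) ≤ κ} := by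
      intro a ha
      simp only [Set.mem_setOf_eq, not_forall, not_lt] at ha
      obtain ⟨ξ, hξ⟩ := ha
      exact Set.mem_iUnion.2 ⟨ξ, hξ⟩
    refine le_trans (Cardinal.mk_le_mk_of_subset hsub) ?_
    refine le_trans (Cardinal.mk_iUnion_le _) ?_
    rw [hTcard]
    calc κ * ⨆ ξ : κ.ord.ToType, #{a : (Order.succ κ).ord.ToType | #(K ξ a) ≤ κ} ≤ κ * κ :=
          mul_le_mul' le_rfl (ciSup_le' hSle)
      _ = κ := Cardinal.mul_eq_self hκ0
  -- a good index exists
  have hgood : ∃ a : (Order.succ κ).ord.ToType, ∀ ξ : κ.ord.ToType, κ < #(K ξ a) := by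
    by_contra h
    push_neg at h
    have hall : (Set.univ : Set (Order.succ κ).ord.ToType) ⊆ {a : (Order.succ κ).ord.ToType | ¬ ∀ ξ : κ.ord.ToType, κ < #(K ξ a)} := by
      intro a _
      simp only [Set.mem_setOf_eq, not_forall, not_lt]
      obtain ⟨ξ, hξ⟩ := h a
      exact ⟨ξ, hξ⟩
    have : Order.succ κ ≤ κ := by
      calc Order.succ κ = #(Order.succ κ).ord.ToType := hTscard.symm
        _ = #(Set.univ : Set (Order.succ κ).ord.ToType) := Cardinal.mk_univ.symm
        _ ≤ #{a : (Order.succ κ).ord.ToType | ¬ ∀ ξ : κ.ord.ToType, κ < #(K ξ a)} := Cardinal.mk_le_mk_of_subset hall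
        _ ≤ κ := hbad
    exact absurd this (not_le.2 (Order.lt_succ κ))
  obtain ⟨α, hα⟩ := hgood
  -- step lemma for the recursion
  have key : ∀ (ξ : κ.ord.ToType) (p : ∀ η : κ.ord.ToType, η < ξ → (Order.succ κ).ord.ToType),
      ∃ j : (Order.succ κ).ord.ToType, j ∈ K ξ α ∧ j ≠ α ∧ ∀ η (h : η < ξ), j ≠ p η h := by
    intro ξ p
    set A : Set (Order.succ κ).ord.ToType := insert α (Set.range (fun η : Set.Iio ξ => p η.1 η.2)) with hA
    have hAle : #A ≤ κ := by
      refine le_trans Cardinal.mk_insert_le (le_of_lt ?_)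
      refine Cardinal.add_lt_of_lt hκ0 ?_ h1κ
      exact lt_of_le_of_lt Cardinal.mk_range_le
        (lt_of_lt_of_le (Cardinal.mk_Iio_ord_toType ξ) le_rfl)
    have hns : ¬ K ξ α ⊆ A := by
      intro hsub
      exact absurd (le_trans (Cardinal.mk_le_mk_of_subset hsub) hAle) (not_le.2 (hα ξ))
    obtain ⟨j, hjK, hjA⟩ := Set.not_subset.1 hns
    refine ⟨j, hjK, ?_, ?_⟩
    · intro hj; exact hjA (by rw [hA, hj]; exact Set.mem_insert _ _)
    · intro η h hj
      exact hjA (Set.mem_insert_iff.2 (Or.inr ⟨⟨η, h⟩, hj.symm⟩))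
  -- define the recursion
  let g : κ.ord.ToType → (Order.succ κ).ord.ToType := IsWellFounded.fix (· < ·)
    (fun ξ ih => (key ξ ih).choose)
  have hg : ∀ ξ : κ.ord.ToType, g ξ = (key ξ (fun η _ => g η)).choose := fun ξ =>
    IsWellFounded.fix_eq _ _ _
  have hgspec : ∀ ξ : κ.ord.ToType, g ξ ∈ K ξ α ∧ g ξ ≠ α ∧ ∀ η (h : η < ξ), g ξ ≠ g η := by
    intro ξ
    rw [hg ξ]
    exact (key ξ (fun η _ => g η)).choose_spec
  have hginj : Function.Injective g := by
    intro a b hab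
    by_contra hne
    rcases lt_or_gt_of_ne hne with h | h
    · exact (hgspec b).2.2 a h hab.symm
    · exact (hgspec a).2.2 b h hab
  -- trace equalities in usable form
  have htr : ∀ (ξ : κ.ord.ToType) (ν : κ.ord.ToType), ν ∈ D ξ →
      (ν ∈ X α → ν ∈ X (g ξ)) ∧ (ν ∈ Z α → ν ∈ Z (g ξ)) := by
    intro ξ ν hν
    have h1 := (hgspec ξ).1
    rw [hKdef] at h1
    have hX1 := congrArg Prod.fst h1
    have hZ1 := congrArg Prod.snd h1
    simp only [htdef] at hX1 hZ1
    constructor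
    · intro hmem
      have := Set.ext_iff.1 hX1 ⟨ν, hν⟩
      exact this.2 hmem
    · intro hmem
      have := Set.ext_iff.1 hZ1 ⟨ν, hν⟩
      exact this.2 hmem
  refine ⟨Set.range g, ?_, ?_, α, ?_, ?_⟩
  · rw [Cardinal.mk_range_eq g hginj, hTcard]
  · -- the intersection is in F
    have hW : (Xw ∩ X α ∩ {ν : κ.ord.ToType | ∀ i, i < π ν → ν ∈ X (g i)}) ∈ F :=
      Filter.inter_mem (Filter.inter_mem hXwF (hX α))
        (hdiag (fun i => X (g i)) (fun i => hX (g i)))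
    refine Filter.mem_of_superset hW ?_
    intro ν hν
    refine Set.mem_iInter₂.2 ?_
    rintro j ⟨ξ, rfl⟩
    rcases lt_or_ge ξ (π ν) with h | h
    · exact hν.2 ξ h
    · have hνD : ν ∈ D ξ := Or.inl ⟨hν.1.1, h⟩
      exact (htr ξ ν hνD).1 hν.1.2
  · -- α is not in Y
    rintro ⟨ξ, hξ⟩
    exact (hgspec ξ).2.1 hξ
  · -- the finite-subset covering property
    intro s hfin hsubZ
    rcases s.eq_empty_or_nonempty with rfl | hne
    · have hTne : Nonempty κ.ord.ToType := by
        rw [← Cardinal.mk_ne_zero_iff, hTcard]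
        exact hreg.pos.ne'
      obtain ⟨ξ⟩ := hTne
      exact ⟨g ξ, Set.mem_range_self ξ, Set.empty_subset _⟩
    · obtain ⟨ξ, hξs, hmax⟩ := Set.Finite.exists_maximalFor id s hfin hne
      have hbound : ∀ a ∈ s, a ≤ ξ := by
        intro a ha
        by_contra hlt
        push_neg at hlt
        exact absurd (hmax ha hlt.le) (not_le.2 hlt)
      refine ⟨g ξ, Set.mem_range_self ξ, ?_⟩
      intro ν hνs
      have hνD : ν ∈ D ξ := Or.inr (hbound ν hνs)
      exact (htr ξ ν hνD).2 (hsubZ hνs)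
end

section
/- Let F₁,…,Fₙ be P-point filters on κ with witnessing functions π₁,…,πₙ. Then for every X ∈ ∏*_{i=1}^{n} F_i there exist sets X_i ∈ F_i (1 ≤ i ≤ n) such that the box ∏*_{i=1}^{n} X_i := {⟨α₁,…,αₙ⟩ ∈ [κ]^{n*} : α_i ∈ X_i for all 1 ≤ i ≤ n} is contained in X. -/
open Cardinal Set

/-- `[κ]^{n*}`: the set of tuples `⟨α₀,…,α_{n-1}⟩` such that `α_{i} < π_{i+1}(α_{i+1})`
for all consecutive indices. -/
def starTuples {C : Type} [LT C] (n : ℕ) (π : Fin n → C → C) :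
    Set (Fin n → C) :=
  {a | ∀ (i : ℕ) (h : i + 1 < n),
    a ⟨i, Nat.lt_of_succ_lt h⟩ < π ⟨i + 1, h⟩ (a ⟨i + 1, h⟩)}

/-- Membership in the filter `∏*_{i} F i`, defined by recursion on the number of
coordinates: `X ∈ ∏* F` iff `{a : X_a ∈ ∏*(tail of F)} ∈ F 0`, where
`X_a` is the section of `X` at first coordinate `a`. -/
def memStarProd {C : Type} : (n : ℕ) → (Fin (n + 1) → Filter C) →
    Set (Fin (n + 1) → C) → Prop
  | 0, F, X => {a : C | (fun _ => a) ∈ X} ∈ F 0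
  | n + 1, F, X =>
      {a : C | memStarProd n (fun i => F i.succ) {v | Fin.cons a v ∈ X}} ∈ F 0

/-- The tail of a `*`-increasing tuple is `*`-increasing for the tail of the witnesses. -/
theorem starTuples_tail {C : Type} [LT C] {n : ℕ} {π : Fin (n + 2) → C → C}
    {a : Fin (n + 2) → C} (ha : a ∈ starTuples (n + 2) π) :
    Fin.tail a ∈ starTuples (n + 1) (fun i => π i.succ) := by
  intro i h
  have h' : (i + 1) + 1 < n + 2 := Nat.succ_lt_succ h
  have := ha (i + 1) h'
  exact this

/-- Chain diagonalization: given a family `S` of members of the last filter indexed by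
ordinals, there are `Z i ∈ F i` such that every `*`-increasing chain through the `Z i`
has its last element in `S` of its first element. -/
theorem chain_lemma (κ : Cardinal) :
    ∀ (m : ℕ) (F : Fin (m + 2) → Filter κ.ord.ToType)
      (π : Fin (m + 2) → κ.ord.ToType → κ.ord.ToType),
      (∀ i, IsPPointFilter κ (F i) (π i)) →
      ∀ S : κ.ord.ToType → Set κ.ord.ToType,
        (∀ α, S α ∈ F (Fin.last (m + 1))) →
        ∃ Z : Fin (m + 2) → Set κ.ord.ToType,
          (∀ i, Z i ∈ F i) ∧
          ∀ a : Fin (m + 2) → κ.ord.ToType, a ∈ starTuples (m + 2) π →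
            (∀ i, a i ∈ Z i) → a (Fin.last (m + 1)) ∈ S (a 0) := by
  intro m
  induction m with
  | zero =>
      intro F π hpp S hS
      have hD : {ν | ∀ i, i < π 1 ν → ν ∈ S i} ∈ F 1 := (hpp 1).2.2.2 S hS
      refine ⟨fun j => if j = 0 then Set.univ else {ν | ∀ i, i < π 1 ν → ν ∈ S i},
        ?_, ?_⟩
      · intro i
        fin_cases i
        · simp
        · simpa using hD
      · intro a ha haZ
        have hchain := ha 0 (by norm_num)
        have h1 : a 1 ∈ {ν | ∀ i, i < π 1 ν → ν ∈ S i} := by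
          have := haZ 1
          simpa using this
        have : a 0 < π 1 (a 1) := hchain
        exact h1 (a 0) this
  | succ m ih =>
      intro F π hpp S hS
      -- intersect the family along initial segments determined by `π 1`
      set T : κ.ord.ToType → Set κ.ord.ToType :=
        fun β => ⋂ α : {x // x < π 1 β}, S α.val with hT
      have hTmem : ∀ β, T β ∈ F (Fin.last (m + 2)) := by
        intro β
        refine (hpp (Fin.last (m + 2))).2.1 {x // x < π 1 β} (fun α => S α.val) ?_
          (fun α => hS α.val)
        exact mk_Iio_ord_toType (π 1 β)
      have hlast : (Fin.last (m + 1)).succ = Fin.last (m + 2) := rfl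
      obtain ⟨Z', hZ'mem, hZ'⟩ := ih (fun i => F i.succ) (fun i => π i.succ)
        (fun i => hpp i.succ) T (fun α => hTmem α)
      refine ⟨Fin.cons Set.univ Z', ?_, ?_⟩
      · intro i
        refine Fin.cases ?_ ?_ i
        · simp
        · intro j
          simpa using hZ'mem j
      · intro a ha haZ
        have hbchain : Fin.tail a ∈ starTuples (m + 2) (fun i => π i.succ) :=
          starTuples_tail ha
        have hbZ : ∀ i, Fin.tail a i ∈ Z' i := by
          intro i
          have := haZ i.succ
          simpa [Fin.tail] using this
        have hlast2 : Fin.tail a (Fin.last (m + 1)) ∈ T (Fin.tail a 0) :=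
          hZ' (Fin.tail a) hbchain hbZ
        have h01 : a 0 < π 1 (a 1) := ha 0 (by omega)
        have : Fin.tail a (Fin.last (m + 1)) ∈ S (a 0) := by
          rw [hT] at hlast2
          have := Set.mem_iInter.1 hlast2 ⟨a 0, h01⟩
          exact this
        exact this

/-- Every member `X` of the filter `∏*_{i} F i` on `[κ]^{(n+1)*}` contains a "box":
there are `Xs i ∈ F i` such that every `*`-increasing tuple `a ∈ [κ]^{(n+1)*}` with
`a i ∈ Xs i` for all `i` belongs to `X`. -/
theorem starProd_contains_box
    (κ : Cardinal) (hreg : κ.IsRegular) (hκ : ℵ₀ < κ)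
    (n : ℕ) (F : Fin (n + 1) → Filter κ.ord.ToType)
    (π : Fin (n + 1) → κ.ord.ToType → κ.ord.ToType)
    (hpp : ∀ i, IsPPointFilter κ (F i) (π i))
    (X : Set (Fin (n + 1) → κ.ord.ToType))
    (hXsub : X ⊆ starTuples (n + 1) π)
    (hX : memStarProd n F X) :
    ∃ Xs : Fin (n + 1) → Set κ.ord.ToType,
      (∀ i, Xs i ∈ F i) ∧
      {a | a ∈ starTuples (n + 1) π ∧ ∀ i, a i ∈ Xs i} ⊆ X := by
  induction n with
  | zero =>
      refine ⟨fun _ => {a | (fun _ => a) ∈ X}, ?_, ?_⟩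
      · intro i
        fin_cases i
        exact hX
      · rintro a ⟨-, h2⟩
        have := h2 0
        have ha : a = fun _ => a 0 := funext fun i => congrArg a (Fin.eq_zero i)
        rw [ha]
        exact this
  | succ n IH =>
      set A : Set κ.ord.ToType :=
        {α | memStarProd n (fun i => F i.succ) {v | Fin.cons α v ∈ X}} with hA
      have hAmem : A ∈ F 0 := hX
      -- apply the induction hypothesis to each section
      have key : ∀ α : κ.ord.ToType, ∃ Ys : Fin (n + 1) → Set κ.ord.ToType,
          (∀ i, Ys i ∈ F i.succ) ∧
          (α ∈ A → {v | v ∈ starTuples (n + 1) (fun i => π i.succ) ∧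
            ∀ i, v i ∈ Ys i} ⊆ {v | Fin.cons α v ∈ X}) := by
        intro α
        by_cases hα : α ∈ A
        · have hα' : memStarProd n (fun i => F i.succ) {v | Fin.cons α v ∈ X} := hα
          obtain ⟨Ys, h1, h2⟩ := IH (fun i => F i.succ) (fun i => π i.succ)
            (fun i => hpp i.succ) {v | Fin.cons α v ∈ X}
            (fun v hv => by
              have := starTuples_tail (hXsub hv)
              simpa using this)
            hα'
          exact ⟨Ys, h1, fun _ => h2⟩
        · exact ⟨fun _ => Set.univ, fun _ => Filter.univ_mem, fun h => absurd h hα⟩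
      choose Ys hYs1 hYs2 using key
      -- chain diagonalization for each tail coordinate
      have hcast : ∀ i : Fin (n + 1), i.val + 2 ≤ n + 2 := fun i => by omega
      have keyZ : ∀ i : Fin (n + 1),
          ∃ Z : Fin (i.val + 2) → Set κ.ord.ToType,
            (∀ j, Z j ∈ F (Fin.castLE (hcast i) j)) ∧
            ∀ a : Fin (i.val + 2) → κ.ord.ToType,
              a ∈ starTuples (i.val + 2) (fun j => π (Fin.castLE (hcast i) j)) →
              (∀ j, a j ∈ Z j) → a (Fin.last (i.val + 1)) ∈ Ys (a 0) i := by
        intro i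
        have := chain_lemma κ i.val (fun j => F (Fin.castLE (hcast i) j))
          (fun j => π (Fin.castLE (hcast i) j))
          (fun j => hpp (Fin.castLE (hcast i) j))
          (fun α => Ys α i)
          (fun α => hYs1 α i)
        exact this
      choose Z hZ1 hZ2 using keyZ
      set W : Fin (n + 1) → Fin (n + 2) → Set κ.ord.ToType :=
        fun i k => if h : k.val < i.val + 2 then Z i ⟨k.val, h⟩ else Set.univ with hW
      refine ⟨fun k => (if k = 0 then A else Set.univ) ∩ ⋂ i : Fin (n + 1), W i k,
        ?_, ?_⟩
      · intro k
        refine Filter.inter_mem ?_ ?_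
        · by_cases hk : k = 0
          · subst hk; simpa using hAmem
          · simp [hk]
        · refine (Filter.iInter_mem).2 fun i => ?_
          simp only [hW]
          by_cases h : k.val < i.val + 2
          · rw [dif_pos h]
            exact hZ1 i ⟨k.val, h⟩
          · rw [dif_neg h]
            exact Filter.univ_mem
      · rintro a ⟨ha1, ha2⟩
        have ha0 : a 0 ∈ A := by
          have := (ha2 0).1
          simpa using this
        have htail : ∀ i : Fin (n + 1), Fin.tail a i ∈ Ys (a 0) i := by
          intro i
          set b : Fin (i.val + 2) → κ.ord.ToType :=
            fun j => a (Fin.castLE (hcast i) j) with hb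
          have hbchain : b ∈ starTuples (i.val + 2)
              (fun j => π (Fin.castLE (hcast i) j)) := by
            intro j hj
            exact ha1 j (by omega)
          have hbZ : ∀ j, b j ∈ Z i j := by
            intro j
            have := (ha2 (Fin.castLE (hcast i) j)).2
            have hmem := Set.mem_iInter.1 this i
            simp only [hW, Fin.coe_castLE] at hmem
            rw [dif_pos j.isLt] at hmem
            exact hmem
          have := hZ2 i b hbchain hbZ
          exact this
        have htail' : Fin.tail a ∈ starTuples (n + 1) (fun i => π i.succ) :=
          starTuples_tail ha1
        have hmemX : Fin.cons (a 0) (Fin.tail a) ∈ X := hYs2 (a 0) ha0 ⟨htail', htail⟩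
        have hcons : Fin.cons (a 0) (Fin.tail a) = a := Fin.cons_self_tail a
        rwa [hcons] at hmemX
end

section
/- Assume κ is a regular uncountable cardinal with 2^{<κ} = κ and F₁,…,Fₙ are P-point filters on κ with witnessing functions π₁,…,πₙ. Then the filter ∏*_{i=1}^{n} F_i satisfies the generalized Galvin property: for every sequence ⟨Y_i : i < κ⁺⟩ of members of ∏*_{i=1}^{n} F_i and every sequence ⟨Z_i : i < κ⁺⟩ of subsets of κ, there is a set Y ⊆ κ⁺ of cardinality κ such that ⋂_{i∈Y} Y_i ∈ ∏*_{i=1}^{n} F_i and there is α ∈ κ⁺ \ Y with [Z_α]^{<ω} ⊆ ⋃_{i∈Y} [Z_i]^{<ω}. -/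
open Cardinal Set

/-! ### Auxiliary facts about the ordinal representation of `κ` -/

section Aux

variable {κ : Cardinal}

lemma GalvinAux.mk_Iio_lt (j : κ.ord.ToType) : #(Set.Iio j) < κ := by
  haveI : IsWellOrder κ.ord.ToType (· < ·) := isWellOrder_lt
  have h1 : Ordinal.typein (α := κ.ord.ToType) ((· < ·)) j < κ.ord := by
    simpa [Ordinal.type_toType] using
      Ordinal.typein_lt_type (α := κ.ord.ToType) ((· < ·)) j
  have h2 := Ordinal.card_typein (r := ((· < ·) : κ.ord.ToType → κ.ord.ToType → Prop)) j
  have h3 := (Cardinal.lt_ord.mp h1)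
  rw [h2] at h3
  exact lt_of_eq_of_lt (by rfl) h3

lemma GalvinAux.mk_Iic_lt (hκ : ℵ₀ < κ) (j : κ.ord.ToType) : #(Set.Iic j) < κ := by
  have h : (Set.Iic j) = insert j (Set.Iio j) := by
    ext x; simp [le_iff_lt_or_eq, or_comm]
  rw [h]
  refine lt_of_le_of_lt (Cardinal.mk_insert_le) ?_
  exact Cardinal.add_lt_of_lt hκ.le (GalvinAux.mk_Iio_lt j) (lt_of_lt_of_le one_lt_aleph0 hκ.le)

lemma GalvinAux.bounded_of_small (hreg : κ.IsRegular) {T : Set κ.ord.ToType} (hT : #T < κ) :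
    ∃ b, ∀ x ∈ T, x < b := by
  haveI : IsWellOrder κ.ord.ToType (· < ·) := isWellOrder_lt
  have h : #T < Ordinal.cof (Ordinal.type ((· < ·) : κ.ord.ToType → κ.ord.ToType → Prop)) := by
    rw [Ordinal.type_toType, hreg.cof_eq]; exact hT
  by_contra hne
  push_neg at hne
  have hc : IsCofinal T := fun a => by obtain ⟨x, hx, hax⟩ := hne a; exact ⟨x, hx, hax⟩
  rw [Ordinal.cof_type] at h
  exact absurd (Order.cof_le hc) (not_le.2 h)

/-- From the almost-one-to-one condition, get a set `X ∈ F` and a bound function `s`. -/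
lemma GalvinAux.exists_bound (hreg : κ.IsRegular) (hκ : ℵ₀ < κ)
    {F : Filter κ.ord.ToType} {π : κ.ord.ToType → κ.ord.ToType}
    (hX : ∃ X ∈ F, ∀ a : κ.ord.ToType, #↥{ν | ν ∈ X ∧ π ν = a} < κ) :
    ∃ (X : Set κ.ord.ToType) (s : κ.ord.ToType → κ.ord.ToType),
      X ∈ F ∧ ∀ j b, b ∈ X → π b ≤ j → b < s j := by
  obtain ⟨X, hXF, hfib⟩ := hX
  have hsmall : ∀ j : κ.ord.ToType, #↥{b | b ∈ X ∧ π b ≤ j} < κ := by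
    intro j
    have hsub : {b | b ∈ X ∧ π b ≤ j} ⊆
        ⋃ (a : Set.Iic j), {ν | ν ∈ X ∧ π ν = (a : κ.ord.ToType)} := by
      intro b ⟨hb1, hb2⟩
      exact Set.mem_iUnion.2 ⟨⟨π b, hb2⟩, ⟨hb1, rfl⟩⟩
    refine lt_of_le_of_lt (Cardinal.mk_le_mk_of_subset hsub) ?_
    refine lt_of_le_of_lt (Cardinal.mk_iUnion_le _) ?_
    refine Cardinal.mul_lt_of_lt hκ.le (GalvinAux.mk_Iic_lt hκ j) ?_
    exact Cardinal.iSup_lt_of_isRegular hreg (GalvinAux.mk_Iic_lt hκ j) (fun a => hfib a)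
  have hbd : ∀ j, ∃ m, ∀ x ∈ {b | b ∈ X ∧ π b ≤ j}, x < m :=
    fun j => GalvinAux.bounded_of_small hreg (hsmall j)
  choose s hs using hbd
  exact ⟨X, s, hXF, fun j b hb hπ => hs j b ⟨hb, hπ⟩⟩

end Aux

/-! ### Basic properties of `memStarProd` -/

lemma memStarProd_mono {C : Type} : ∀ (n : ℕ) (F : Fin (n + 1) → Filter C)
    (A B : Set (Fin (n + 1) → C)), A ⊆ B → memStarProd n F A → memStarProd n F B := by
  intro n
  induction n with
  | zero =>
    intro F A B hAB h
    exact Filter.mem_of_superset h (fun a ha => hAB ha)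
  | succ n ih =>
    intro F A B hAB h
    refine Filter.mem_of_superset h (fun a ha => ?_)
    exact ih _ _ _ (fun v hv => hAB hv) ha

lemma memStarProd_univ {C : Type} : ∀ (n : ℕ) (F : Fin (n + 1) → Filter C),
    memStarProd n F Set.univ := by
  intro n
  induction n with
  | zero => intro F; simp only [memStarProd, Set.mem_univ, Set.setOf_true]; exact Filter.univ_mem
  | succ n ih =>
    intro F
    show {a : C | memStarProd n _ {v | Fin.cons a v ∈ (Set.univ : Set (Fin (n+2) → C))}} ∈ F 0
    have h : ∀ a : C, {v : Fin (n+1) → C | Fin.cons a v ∈ (Set.univ : Set (Fin (n+2) → C))}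
        = Set.univ := by
      intro a; ext v; simp
    refine Filter.mem_of_superset Filter.univ_mem (fun a _ => ?_)
    show memStarProd n _ _
    rw [h a]
    exact ih _

lemma memStarProd_iInter {κ : Cardinal} :
    ∀ (n : ℕ) (F : Fin (n + 1) → Filter κ.ord.ToType)
    (π : Fin (n+1) → κ.ord.ToType → κ.ord.ToType),
    (∀ i, IsPPointFilter κ (F i) (π i)) →
    ∀ (ι : Type) (A : ι → Set (Fin (n + 1) → κ.ord.ToType)), #ι < κ →
    (∀ i, memStarProd n F (A i)) → memStarProd n F (⋂ i, A i) := by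
  intro n
  induction n with
  | zero =>
    intro F π hpp ι A hι hA
    have h : {a : κ.ord.ToType | (fun _ => a) ∈ ⋂ i, A i} = ⋂ i, {a | (fun _ => a) ∈ A i} := by
      ext a; simp
    show _ ∈ F 0
    rw [h]
    exact (hpp 0).2.1 ι _ hι hA
  | succ n ih =>
    intro F π hpp ι A hι hA
    rcases isEmpty_or_nonempty ι with hι0 | hι0
    · have h : (⋂ i, A i) = Set.univ := by simp
      rw [h]; exact memStarProd_univ _ _
    · show {a | memStarProd n _ {v | Fin.cons a v ∈ ⋂ i, A i}} ∈ F 0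
      have key : (⋂ i, {a : κ.ord.ToType |
          memStarProd n (fun i => F i.succ) {v | Fin.cons a v ∈ A i}}) ⊆
          {a | memStarProd n (fun i => F i.succ) {v | Fin.cons a v ∈ ⋂ i, A i}} := by
        intro a ha
        simp only [Set.mem_iInter, Set.mem_setOf_eq] at ha
        have h : {v : Fin (n+1) → κ.ord.ToType | Fin.cons a v ∈ ⋂ i, A i}
            = ⋂ i, {v | Fin.cons a v ∈ A i} := by
          ext v; simp
        show memStarProd n _ _
        rw [h]
        exact ih (fun i => F i.succ) (fun i => π i.succ) (fun i => hpp i.succ) ι _ hι ha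
      exact Filter.mem_of_superset ((hpp 0).2.1 ι _ hι hA) key

lemma memStarProd_inter {κ : Cardinal} (hκ : ℵ₀ < κ)
    (n : ℕ) (F : Fin (n + 1) → Filter κ.ord.ToType)
    (π : Fin (n+1) → κ.ord.ToType → κ.ord.ToType)
    (hpp : ∀ i, IsPPointFilter κ (F i) (π i))
    {A B : Set (Fin (n + 1) → κ.ord.ToType)}
    (hA : memStarProd n F A) (hB : memStarProd n F B) : memStarProd n F (A ∩ B) := by
  have h : A ∩ B = ⋂ (b : Bool), (if b then A else B) := by
    ext x; simp [Bool.forall_bool, and_comm]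
  rw [h]
  refine memStarProd_iInter n F π hpp Bool _ ?_ ?_
  · have : #Bool < ℵ₀ := by
      exact lt_of_eq_of_lt Cardinal.mk_bool (Cardinal.nat_lt_aleph0 2)
    exact lt_trans this hκ
  · intro b; cases b <;> simpa

/-! ### Hereditary traces -/

/-- Hereditary trace of a set of tuples at level `j`, encoded as a set of lists. -/
def trace {C : Type} [LT C] : (n : ℕ) → (F : Fin (n + 1) → Filter C) →
    (s : Fin (n + 1) → C → C) → Set (Fin (n + 1) → C) → C → Set (List C)
  | 0, _, s, A, j => {l | ∃ b, l = [b] ∧ b < s 0 j ∧ (fun _ => b) ∈ A}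
  | n + 1, F, s, A, j =>
      {l | ∃ b, b < s 0 j ∧
        ((l = [b] ∧ memStarProd n (fun i => F i.succ) {v | Fin.cons b v ∈ A}) ∨
         (∃ l', l = b :: l' ∧
            l' ∈ trace n (fun i => F i.succ) (fun i => s i.succ) {v | Fin.cons b v ∈ A} j))}

lemma trace_ne_nil {C : Type} [LT C] : ∀ (n : ℕ) (F : Fin (n + 1) → Filter C)
    (s : Fin (n + 1) → C → C) (A : Set (Fin (n + 1) → C)) (j : C) (l : List C),
    l ∈ trace n F s A j → l ≠ [] := by
  intro n
  induction n with
  | zero => rintro F s A j l ⟨b, rfl, _⟩; simp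
  | succ n ih =>
    rintro F s A j l ⟨b, _, (⟨rfl, _⟩ | ⟨l', rfl, _⟩)⟩ <;> simp

lemma trace_zero_mem {C : Type} [LT C] (F : Fin 1 → Filter C) (s : Fin 1 → C → C)
    (A : Set (Fin 1 → C)) (j b : C) :
    [b] ∈ trace 0 F s A j ↔ b < s 0 j ∧ (fun _ => b) ∈ A := by
  constructor
  · rintro ⟨b', hb', h1, h2⟩
    obtain rfl : b' = b := by simpa using hb'.symm
    exact ⟨h1, h2⟩
  · rintro ⟨h1, h2⟩; exact ⟨b, rfl, h1, h2⟩

lemma trace_succ_single_mem {C : Type} [LT C] {n : ℕ} (F : Fin (n + 2) → Filter C)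
    (s : Fin (n + 2) → C → C) (A : Set (Fin (n + 2) → C)) (j b : C) :
    [b] ∈ trace (n + 1) F s A j ↔
      b < s 0 j ∧ memStarProd n (fun i => F i.succ) {v | Fin.cons b v ∈ A} := by
  constructor
  · rintro ⟨b', hb', (⟨hl, h⟩ | ⟨l', hl, hl'⟩)⟩
    · obtain rfl : b' = b := by simpa using hl.symm
      exact ⟨hb', h⟩
    · exfalso
      have hnil : l' = [] := by simpa using (congrArg List.tail hl)
      exact trace_ne_nil _ _ _ _ _ _ hl' hnil
  · rintro ⟨h1, h2⟩; exact ⟨b, h1, Or.inl ⟨rfl, h2⟩⟩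

lemma trace_succ_cons_mem {C : Type} [LT C] {n : ℕ} (F : Fin (n + 2) → Filter C)
    (s : Fin (n + 2) → C → C) (A : Set (Fin (n + 2) → C)) (j b : C) (l : List C)
    (hl : l ≠ []) :
    (b :: l) ∈ trace (n + 1) F s A j ↔
      b < s 0 j ∧ l ∈ trace n (fun i => F i.succ) (fun i => s i.succ)
        {v | Fin.cons b v ∈ A} j := by
  constructor
  · rintro ⟨b', hb', (⟨hl', _⟩ | ⟨l', hl', h⟩)⟩
    · exfalso
      have h := congrArg List.tail hl'
      simp at h
      exact hl h
    · obtain rfl : b = b' := by simpa using congrArg List.head? hl'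
      obtain rfl : l = l' := by simpa using congrArg List.tail hl'
      exact ⟨hb', h⟩
  · rintro ⟨h1, h2⟩; exact ⟨b, h1, Or.inr ⟨l, rfl, h2⟩⟩

lemma trace_entries_lt {C : Type} [LT C] : ∀ (n : ℕ) (F : Fin (n + 1) → Filter C)
    (s : Fin (n + 1) → C → C) (A : Set (Fin (n + 1) → C)) (j : C) (l : List C),
    l ∈ trace n F s A j → ∀ x ∈ l, ∃ k : Fin (n + 1), x < s k j := by
  intro n
  induction n with
  | zero =>
    rintro F s A j l ⟨b, rfl, hb, _⟩ x hx
    obtain rfl : x = b := by simpa using hx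
    exact ⟨0, hb⟩
  | succ n ih =>
    rintro F s A j l ⟨b, hb, (⟨rfl, _⟩ | ⟨l', rfl, hl'⟩)⟩ x hx
    · obtain rfl : x = b := by simpa using hx
      exact ⟨0, hb⟩
    · rcases List.mem_cons.1 hx with rfl | hx'
      · exact ⟨0, hb⟩
      · obtain ⟨k, hk⟩ := ih _ _ _ _ _ hl' x hx'
        exact ⟨k.succ, hk⟩

/-- Slices of equal traces have equal traces. -/
lemma trace_slice_congr {C : Type} [LT C] {n : ℕ} {F : Fin (n + 2) → Filter C}
    {s : Fin (n + 2) → C → C} {A A' : Set (Fin (n + 2) → C)} {j b : C}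
    (h : trace (n + 1) F s A j = trace (n + 1) F s A' j) (hb : b < s 0 j) :
    trace n (fun i => F i.succ) (fun i => s i.succ) {v | Fin.cons b v ∈ A} j =
    trace n (fun i => F i.succ) (fun i => s i.succ) {v | Fin.cons b v ∈ A'} j := by
  ext l
  constructor
  · intro hl
    have hnil := trace_ne_nil _ _ _ _ _ _ hl
    have h1 : (b :: l) ∈ trace (n + 1) F s A j :=
      (trace_succ_cons_mem F s A j b l hnil).2 ⟨hb, hl⟩
    rw [h] at h1
    exact ((trace_succ_cons_mem F s A' j b l hnil).1 h1).2
  · intro hl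
    have hnil := trace_ne_nil _ _ _ _ _ _ hl
    have h1 : (b :: l) ∈ trace (n + 1) F s A' j :=
      (trace_succ_cons_mem F s A' j b l hnil).2 ⟨hb, hl⟩
    rw [← h] at h1
    exact ((trace_succ_cons_mem F s A j b l hnil).1 h1).2

/-- From equal traces, slice memberships in the tail product agree. -/
lemma trace_slice_mem_congr {C : Type} [LT C] {n : ℕ} {F : Fin (n + 2) → Filter C}
    {s : Fin (n + 2) → C → C} {A A' : Set (Fin (n + 2) → C)} {j b : C}
    (h : trace (n + 1) F s A j = trace (n + 1) F s A' j) (hb : b < s 0 j)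
    (hA : memStarProd n (fun i => F i.succ) {v | Fin.cons b v ∈ A}) :
    memStarProd n (fun i => F i.succ) {v | Fin.cons b v ∈ A'} := by
  have h1 : [b] ∈ trace (n + 1) F s A j := (trace_succ_single_mem F s A j b).2 ⟨hb, hA⟩
  rw [h] at h1
  exact ((trace_succ_single_mem F s A' j b).1 h1).2

/-! ### Counting lemmas -/

section Counting

variable {κ : Cardinal}

lemma GalvinAux.mk_lists_bounded_lt (hκ : ℵ₀ < κ) (S : Set κ.ord.ToType) (hS : #S < κ) :
    #{l : List κ.ord.ToType | ∀ x ∈ l, x ∈ S} < κ := by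
  set W := {l : List κ.ord.ToType | ∀ x ∈ l, x ∈ S}
  have hinj : Function.Injective
      (fun (l : ↥W) => (l : List κ.ord.ToType).attachWith _ l.2) := by
    rintro ⟨l1, h1⟩ ⟨l2, h2⟩ h
    have h' := congrArg (List.map Subtype.val) h
    simpa using h'
  refine lt_of_le_of_lt (Cardinal.mk_le_of_injective hinj) ?_
  rcases isEmpty_or_nonempty ↥S with he | hne
  · haveI : Countable ↥S := Subsingleton.to_countable
    exact lt_of_le_of_lt Cardinal.mk_le_aleph0 hκ
  · rw [Cardinal.mk_list_eq_max_mk_aleph0]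
    exact max_lt hS hκ

lemma GalvinAux.mk_subsets_le {α : Type}
    (h2 : ∀ ν : Cardinal, ν < κ → (2 : Cardinal) ^ ν ≤ κ)
    {W : Set α} (hW : #W < κ) : #{t : Set α | t ⊆ W} ≤ κ := by
  have hinj : Function.Injective
      (fun (t : {t : Set α | t ⊆ W}) => ({x : ↥W | (x : α) ∈ (t : Set α)} : Set ↥W)) := by
    rintro ⟨t1, h1⟩ ⟨t2, h2'⟩ h
    simp only at h
    simp only [Subtype.mk.injEq]
    ext x
    constructor
    · intro hx
      have hm : (⟨x, h1 hx⟩ : ↥W) ∈ {x : ↥W | (x : α) ∈ t1} := hx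
      rw [h] at hm; exact hm
    · intro hx
      have hm : (⟨x, h2' hx⟩ : ↥W) ∈ {x : ↥W | (x : α) ∈ t2} := hx
      rw [← h] at hm; exact hm
  refine le_trans (Cardinal.mk_le_of_injective hinj) ?_
  rw [Cardinal.mk_set]
  exact h2 _ hW

/-- There are at most `κ` possible traces at each level. -/
lemma GalvinAux.mk_traces_le (hκ : ℵ₀ < κ)
    (h2 : ∀ ν : Cardinal, ν < κ → (2 : Cardinal) ^ ν ≤ κ)
    (n : ℕ) (F : Fin (n + 1) → Filter κ.ord.ToType)
    (s : Fin (n + 1) → κ.ord.ToType → κ.ord.ToType) (j : κ.ord.ToType) :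
    #{t : Set (List κ.ord.ToType) | ∃ A, t = trace n F s A j} ≤ κ := by
  obtain ⟨k0, hk0⟩ := Finite.exists_max (fun k : Fin (n + 1) => s k j)
  set m := s k0 j
  set W := {l : List κ.ord.ToType | ∀ x ∈ l, x ∈ Set.Iio m}
  have hWsmall : #W < κ := GalvinAux.mk_lists_bounded_lt hκ _ (GalvinAux.mk_Iio_lt m)
  have hsub : {t : Set (List κ.ord.ToType) | ∃ A, t = trace n F s A j} ⊆
      {t | t ⊆ W} := by
    rintro t ⟨A, rfl⟩ l hl
    intro x hx
    obtain ⟨k, hk⟩ := trace_entries_lt n F s A j l hl x hx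
    exact lt_of_lt_of_le hk (hk0 k)
  exact le_trans (Cardinal.mk_le_mk_of_subset hsub) (GalvinAux.mk_subsets_le h2 hWsmall)

end Counting

/-! ### The main combinatorial lemma -/

/-- If a transfinite sequence of members of the product filter has, at each level `j`, the
same trace as a fixed member `A★`, then (from level `c` onwards) the sets admit a common
subset which is a member of the product filter. -/
lemma memStarProd_zero_iff {C : Type} (F : Fin 1 → Filter C) (X : Set (Fin 1 → C)) :
    memStarProd 0 F X ↔ {a : C | (fun _ => a) ∈ X} ∈ F 0 := Iff.rfl

lemma memStarProd_succ_iff {C : Type} {n : ℕ} (F : Fin (n + 2) → Filter C)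
    (X : Set (Fin (n + 2) → C)) :
    memStarProd (n + 1) F X ↔
      {a : C | memStarProd n (fun i => F i.succ) {v | Fin.cons a v ∈ X}} ∈ F 0 := Iff.rfl

lemma GalvinAux.main {κ : Cardinal} (hκ : ℵ₀ < κ) :
    ∀ (n : ℕ) (F : Fin (n + 1) → Filter κ.ord.ToType)
      (π : Fin (n + 1) → κ.ord.ToType → κ.ord.ToType),
      (∀ i, IsPPointFilter κ (F i) (π i)) →
      ∀ (X : Fin (n + 1) → Set κ.ord.ToType)
        (s : Fin (n + 1) → κ.ord.ToType → κ.ord.ToType),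
      (∀ k, X k ∈ F k) →
      (∀ k j b, b ∈ X k → π k b ≤ j → b < s k j) →
      ∀ (c : κ.ord.ToType)
        (A : κ.ord.ToType → Set (Fin (n + 1) → κ.ord.ToType))
        (Astar : Set (Fin (n + 1) → κ.ord.ToType)),
      (∀ j, memStarProd n F (A j)) →
      memStarProd n F Astar →
      (∀ j, c ≤ j → trace n F s (A j) j = trace n F s Astar j) →
      ∃ W, memStarProd n F W ∧ ∀ j, c ≤ j → W ⊆ A j := by
  intro n
  induction n with
  | zero =>
    intro F π hpp X s hX hs c A Astar hA hAstar htr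
    refine ⟨{a : Fin 1 → κ.ord.ToType | a 0 ∈ X 0 ∧ a ∈ Astar ∧
      ∀ j, j < π 0 (a 0) → a ∈ A j}, ?_, ?_⟩
    · show {b : κ.ord.ToType | (fun _ => b) ∈ _} ∈ F 0
      have heq : {b : κ.ord.ToType | (fun _ : Fin 1 => b) ∈
          {a : Fin 1 → κ.ord.ToType | a 0 ∈ X 0 ∧ a ∈ Astar ∧
            ∀ j, j < π 0 (a 0) → a ∈ A j}} =
          X 0 ∩ ({b | (fun _ : Fin 1 => b) ∈ Astar} ∩
            {b | ∀ j, j < π 0 b → (fun _ : Fin 1 => b) ∈ A j}) := by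
        ext b; simp [Set.mem_setOf_eq]; tauto
      rw [heq]
      refine Filter.inter_mem (hX 0) (Filter.inter_mem hAstar ?_)
      exact (hpp 0).2.2.2 (fun j => {b | (fun _ : Fin 1 => b) ∈ A j}) (fun j => hA j)
    · intro j hcj a ha
      obtain ⟨ha1, ha2, ha3⟩ := ha
      by_cases hlt : j < π 0 (a 0)
      · exact ha3 j hlt
      · have hπ : π 0 (a 0) ≤ j := le_of_not_gt hlt
        have hbs : a 0 < s 0 j := hs 0 j (a 0) ha1 hπ
        have hconst : a = (fun _ : Fin 1 => a 0) :=
          funext (fun i => by rw [Fin.eq_zero i])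
        have hmem : [a 0] ∈ trace 0 F s Astar j := by
          rw [trace_zero_mem]
          exact ⟨hbs, by rw [← hconst]; exact ha2⟩
        rw [← htr j hcj] at hmem
        have := (trace_zero_mem F s (A j) j (a 0)).1 hmem
        rw [hconst]
        exact this.2
  | succ n ih =>
    intro F π hpp X s hX hs c A Astar hA hAstar htr
    have hpp' : ∀ i : Fin (n + 1), IsPPointFilter κ (F i.succ) (π i.succ) :=
      fun i => hpp i.succ
    -- head data
    have hBst : {b : κ.ord.ToType |
        memStarProd n (fun i => F i.succ) {v | Fin.cons b v ∈ Astar}} ∈ F 0 :=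
      (memStarProd_succ_iff F Astar).1 hAstar
    have hBj : ∀ j, {b : κ.ord.ToType |
        memStarProd n (fun i => F i.succ) {v | Fin.cons b v ∈ A j}} ∈ F 0 :=
      fun j => (memStarProd_succ_iff F (A j)).1 (hA j)
    have hH1 : {b : κ.ord.ToType | ∀ j, j < π 0 b →
        b ∈ {b : κ.ord.ToType |
          memStarProd n (fun i => F i.succ) {v | Fin.cons b v ∈ A j}}} ∈ F 0 :=
      (hpp 0).2.2.2 _ hBj
    have hgoodF : X 0 ∩ ({b : κ.ord.ToType |
        memStarProd n (fun i => F i.succ) {v | Fin.cons b v ∈ Astar}} ∩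
        {b : κ.ord.ToType | ∀ j, j < π 0 b →
          memStarProd n (fun i => F i.succ) {v | Fin.cons b v ∈ A j}}) ∈ F 0 :=
      Filter.inter_mem (hX 0) (Filter.inter_mem hBst hH1)
    -- per-slice application of the induction hypothesis
    have key : ∀ b, b ∈ X 0 ∩ ({b : κ.ord.ToType |
        memStarProd n (fun i => F i.succ) {v | Fin.cons b v ∈ Astar}} ∩
        {b : κ.ord.ToType | ∀ j, j < π 0 b →
          memStarProd n (fun i => F i.succ) {v | Fin.cons b v ∈ A j}}) →
        ∃ W', memStarProd n (fun i => F i.succ) W' ∧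
        ∀ j, max c (π 0 b) ≤ j → W' ⊆ {v | Fin.cons b v ∈ A j} := by
      intro b hb
      obtain ⟨hbX, hbBst, _⟩ := hb
      have hbBst' : memStarProd n (fun i => F i.succ) {v | Fin.cons b v ∈ Astar} := hbBst
      have hblt : ∀ j, max c (π 0 b) ≤ j → b < s 0 j := by
        intro j hj
        exact hs 0 j b hbX (le_trans (le_max_right _ _) hj)
      have hA' : ∀ j, memStarProd n (fun i => F i.succ)
          (if max c (π 0 b) ≤ j then {v | Fin.cons b v ∈ A j} else Set.univ) := by
        intro j
        by_cases hj : max c (π 0 b) ≤ j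
        · rw [if_pos hj]
          exact trace_slice_mem_congr (htr j (le_trans (le_max_left _ _) hj)).symm
            (hblt j hj) hbBst'
        · rw [if_neg hj]
          exact memStarProd_univ _ _
      have htr' : ∀ j, max c (π 0 b) ≤ j →
          trace n (fun i => F i.succ) (fun i => s i.succ)
            (if max c (π 0 b) ≤ j then {v | Fin.cons b v ∈ A j} else Set.univ) j =
          trace n (fun i => F i.succ) (fun i => s i.succ) {v | Fin.cons b v ∈ Astar} j := by
        intro j hj
        rw [if_pos hj]
        exact trace_slice_congr (htr j (le_trans (le_max_left _ _) hj)) (hblt j hj)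
      obtain ⟨W', hW1, hW2⟩ := ih (fun i => F i.succ) (fun i => π i.succ) hpp'
        (fun i => X i.succ) (fun i => s i.succ) (fun k => hX k.succ)
        (fun k j b' => hs k.succ j b') (max c (π 0 b))
        (fun j => if max c (π 0 b) ≤ j then {v | Fin.cons b v ∈ A j} else Set.univ)
        {v | Fin.cons b v ∈ Astar} hA' hbBst' htr'
      refine ⟨W', hW1, fun j hj => ?_⟩
      have h' := hW2 j hj
      rwa [if_pos hj] at h'
    choose! Wf hWf1 hWf2 using key
    -- the common subset
    refine ⟨{a : Fin (n + 2) → κ.ord.ToType | a 0 ∈ X 0 ∩ ({b : κ.ord.ToType |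
        memStarProd n (fun i => F i.succ) {v | Fin.cons b v ∈ Astar}} ∩
        {b : κ.ord.ToType | ∀ j, j < π 0 b →
          memStarProd n (fun i => F i.succ) {v | Fin.cons b v ∈ A j}}) ∧
        Fin.tail a ∈ Wf (a 0) ∧
        ∀ j, j < π 0 (a 0) → Fin.cons (a 0) (Fin.tail a) ∈ A j}, ?_, ?_⟩
    · rw [memStarProd_succ_iff]
      refine Filter.mem_of_superset hgoodF (fun b hb => ?_)
      show memStarProd n (fun i => F i.succ) _
      have heq : {v : Fin (n + 1) → κ.ord.ToType | Fin.cons b v ∈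
          {a : Fin (n + 2) → κ.ord.ToType | a 0 ∈ X 0 ∩ ({b : κ.ord.ToType |
            memStarProd n (fun i => F i.succ) {v | Fin.cons b v ∈ Astar}} ∩
            {b : κ.ord.ToType | ∀ j, j < π 0 b →
              memStarProd n (fun i => F i.succ) {v | Fin.cons b v ∈ A j}}) ∧
            Fin.tail a ∈ Wf (a 0) ∧
            ∀ j, j < π 0 (a 0) → Fin.cons (a 0) (Fin.tail a) ∈ A j}} =
          Wf b ∩ ⋂ (j : Set.Iio (π 0 b)), {v | Fin.cons b v ∈ A (j : κ.ord.ToType)} := by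
        ext v
        simp only [Set.mem_setOf_eq, Fin.cons_zero, Fin.tail_cons, Set.mem_inter_iff,
          Set.mem_iInter]
        constructor
        · rintro ⟨_, h1, h2⟩
          exact ⟨h1, fun j => h2 j j.2⟩
        · rintro ⟨h1, h2⟩
          exact ⟨hb, h1, fun j hj => h2 ⟨j, hj⟩⟩
      rw [heq]
      refine memStarProd_inter hκ n (fun i => F i.succ) (fun i => π i.succ) hpp'
        (hWf1 b hb) ?_
      refine memStarProd_iInter n (fun i => F i.succ) (fun i => π i.succ) hpp' _ _
        (GalvinAux.mk_Iio_lt _) ?_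
      rintro ⟨j, hj⟩
      exact hb.2.2 j hj
    · intro j hcj a ha
      obtain ⟨ha1, ha2, ha3⟩ := ha
      by_cases hlt : j < π 0 (a 0)
      · have h' := ha3 j hlt
        rwa [Fin.cons_self_tail a] at h'
      · have hπ0 : π 0 (a 0) ≤ j := le_of_not_gt hlt
        have h' : Fin.cons (a 0) (Fin.tail a) ∈ A j :=
          hWf2 (a 0) ha1 j (max_le hcj hπ0) ha2
        rwa [Fin.cons_self_tail a] at h'

/-! ### A union bound -/

lemma GalvinAux.mk_iUnion_le' {α ι : Type} (A : ι → Set α) {c : Cardinal}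
    (hc : ℵ₀ ≤ c) (h1 : #ι ≤ c) (h2 : ∀ i, #(A i) ≤ c) : #(⋃ i, A i) ≤ c := by
  rcases isEmpty_or_nonempty ι with he | hne
  · have : (⋃ i, A i) = ∅ := by simp
    rw [this]; simp
  · refine le_trans (Cardinal.mk_iUnion_le A) ?_
    calc #ι * ⨆ i, #(A i) ≤ c * c := mul_le_mul' h1 (ciSup_le' h2)
    _ = c := Cardinal.mul_eq_self hc

/-! ### The theorem -/

/-- **Generalized Galvin property for products of P-point filters.** If `κ` is regular
uncountable with `2^{<κ} = κ` and `F 0, …, F n` are P-point filters on `κ`, then for every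
sequence `⟨Y i : i < κ⁺⟩` of members of `∏* F` and every sequence `⟨Z i : i < κ⁺⟩` of
subsets of `κ` there is `S ⊆ κ⁺` of cardinality `κ` with `⋂_{i ∈ S} Y i ∈ ∏* F`, and some
`α ∉ S` such that every finite subset of `Z α` is contained in `Z i` for some `i ∈ S`. -/
theorem starProd_generalized_galvin
    (κ : Cardinal) (hreg : κ.IsRegular) (hκ : ℵ₀ < κ)
    (h2 : ∀ ν : Cardinal, ν < κ → (2 : Cardinal) ^ ν ≤ κ)
    (n : ℕ) (F : Fin (n + 1) → Filter κ.ord.ToType)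
    (π : Fin (n + 1) → κ.ord.ToType → κ.ord.ToType)
    (hpp : ∀ i, IsPPointFilter κ (F i) (π i))
    (Y : (Order.succ κ).ord.ToType → Set (Fin (n + 1) → κ.ord.ToType))
    (hYsub : ∀ i, Y i ⊆ starTuples (n + 1) π)
    (hY : ∀ i, memStarProd n F (Y i))
    (Z : (Order.succ κ).ord.ToType → Set κ.ord.ToType) :
    ∃ S : Set ((Order.succ κ).ord.ToType), #↥S = κ ∧
      memStarProd n F (⋂ i ∈ S, Y i) ∧
      ∃ α, α ∉ S ∧ ∀ s : Set κ.ord.ToType, s.Finite → s ⊆ Z α →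
        ∃ i ∈ S, s ⊆ Z i := by
  classical
  -- notation
  have hmkC : #κ.ord.ToType = κ := by rw [Cardinal.mk_toType, Cardinal.card_ord]
  have hmkD : #(Order.succ κ).ord.ToType = Order.succ κ := by
    rw [Cardinal.mk_toType, Cardinal.card_ord]
  haveI hCne : Nonempty κ.ord.ToType := by
    rw [Ordinal.nonempty_toType_iff]
    intro h0
    have := congrArg Ordinal.card h0
    rw [Cardinal.card_ord] at this
    simp at this
    rw [this] at hκ
    simp at hκ
  -- choose the P-point data
  have hXs : ∀ k : Fin (n + 1), ∃ (X : Set κ.ord.ToType) (s : κ.ord.ToType → κ.ord.ToType),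
      X ∈ F k ∧ ∀ j b, b ∈ X → π k b ≤ j → b < s j :=
    fun k => GalvinAux.exists_bound hreg hκ (hpp k).2.2.1
  choose X s hXF hs using hXs
  -- combined traces
  set τ : (Order.succ κ).ord.ToType → κ.ord.ToType → Set (List κ.ord.ToType) × Set κ.ord.ToType :=
    fun α j => (trace n F s (Y α) j, Z α ∩ Set.Iic j) with hτ
  -- the set of atypical indices is small
  set Bad : Set ((Order.succ κ).ord.ToType) :=
    {α | ∃ j, #{β : (Order.succ κ).ord.ToType | τ β j = τ α j} ≤ κ} with hBad
  have hBadAt : ∀ j : κ.ord.ToType,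
      #{α : (Order.succ κ).ord.ToType | #{β : (Order.succ κ).ord.ToType | τ β j = τ α j} ≤ κ}
        ≤ κ := by
    intro j
    set Pj : Set (Set (List κ.ord.ToType) × Set κ.ord.ToType) :=
      {t | (∃ A, t.1 = trace n F s A j) ∧ t.2 ⊆ Set.Iic j ∧
        #{β : (Order.succ κ).ord.ToType | τ β j = t} ≤ κ} with hPj
    have hsub : {α : (Order.succ κ).ord.ToType |
        #{β : (Order.succ κ).ord.ToType | τ β j = τ α j} ≤ κ} ⊆
        ⋃ (t : ↥Pj), {β : (Order.succ κ).ord.ToType | τ β j = (t : _)} := by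
      intro α hα
      refine Set.mem_iUnion.2 ⟨⟨τ α j, ⟨Y α, rfl⟩, Set.inter_subset_right, hα⟩, rfl⟩
    refine le_trans (Cardinal.mk_le_mk_of_subset hsub) ?_
    refine GalvinAux.mk_iUnion_le' _ hκ.le ?_ (fun t => t.2.2.2)
    -- count Pj
    have hinj : Function.Injective (fun t : ↥Pj =>
        ((⟨(t : Set (List κ.ord.ToType) × Set κ.ord.ToType).1, t.2.1⟩ :
          ↥{t : Set (List κ.ord.ToType) | ∃ A, t = trace n F s A j}),
         (⟨(t : Set (List κ.ord.ToType) × Set κ.ord.ToType).2, t.2.2.1⟩ :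
          ↥{t : Set κ.ord.ToType | t ⊆ Set.Iic j}))) := by
      rintro ⟨⟨t1, t2⟩, ht⟩ ⟨⟨u1, u2⟩, hu⟩ h
      simp only [Prod.mk.injEq, Subtype.mk.injEq] at h ⊢
      exact ⟨h.1, h.2⟩
    refine le_trans (Cardinal.mk_le_of_injective hinj) ?_
    rw [Cardinal.mk_prod, Cardinal.lift_id, Cardinal.lift_id]
    refine le_trans (mul_le_mul'
      (GalvinAux.mk_traces_le hκ h2 n F s j)
      (GalvinAux.mk_subsets_le h2 (GalvinAux.mk_Iic_lt hκ j)))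
      (le_of_eq (Cardinal.mul_eq_self hκ.le))
  have hBadSmall : #Bad ≤ κ := by
    have hsub : Bad ⊆ ⋃ (j : κ.ord.ToType),
        {α : (Order.succ κ).ord.ToType |
          #{β : (Order.succ κ).ord.ToType | τ β j = τ α j} ≤ κ} := by
      rintro α ⟨j, hj⟩
      exact Set.mem_iUnion.2 ⟨j, hj⟩
    refine le_trans (Cardinal.mk_le_mk_of_subset hsub) ?_
    exact GalvinAux.mk_iUnion_le' _ hκ.le hmkC.le hBadAt
  -- pick a typical index
  have hαstar : ∃ αs, αs ∉ Bad := by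
    by_contra h
    push_neg at h
    have : (Set.univ : Set ((Order.succ κ).ord.ToType)) ⊆ Bad := fun α _ => h α
    have hle := Cardinal.mk_le_mk_of_subset this
    rw [Cardinal.mk_univ, hmkD] at hle
    exact absurd (le_trans hle hBadSmall) (not_le.2 (Order.lt_succ κ))
  obtain ⟨αs, hαs⟩ := hαstar
  have hK : ∀ j, κ < #{β : (Order.succ κ).ord.ToType | τ β j = τ αs j} := by
    intro j
    by_contra h
    exact hαs ⟨j, not_lt.1 h⟩
  -- recursively choose an injective selection
  have hrec : ∀ (j : κ.ord.ToType) (g : ∀ j', j' < j → (Order.succ κ).ord.ToType),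
      ∃ β, τ β j = τ αs j ∧ β ≠ αs ∧ ∀ j' (h : j' < j), β ≠ g j' h := by
    intro j g
    set E : Set ((Order.succ κ).ord.ToType) :=
      insert αs (Set.range (fun p : ↥(Set.Iio j) => g p.1 p.2)) with hE
    have hEsmall : #E ≤ κ := by
      refine le_trans Cardinal.mk_insert_le ?_
      have h1 : #(Set.range (fun p : ↥(Set.Iio j) => g p.1 p.2)) ≤ #(Set.Iio j) :=
        Cardinal.mk_range_le
      refine Cardinal.add_lt_of_lt hκ.le
        (lt_of_le_of_lt h1 (GalvinAux.mk_Iio_lt j))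
        (lt_of_lt_of_le one_lt_aleph0 hκ.le) |>.le
    have hne : ({β : (Order.succ κ).ord.ToType | τ β j = τ αs j} \ E).Nonempty := by
      rw [Set.nonempty_iff_ne_empty]
      intro hemp
      have hsubE : {β : (Order.succ κ).ord.ToType | τ β j = τ αs j} ⊆ E := by
        intro β hβ
        by_contra hβE
        exact Set.eq_empty_iff_forall_notMem.1 hemp β ⟨hβ, hβE⟩
      exact absurd (le_trans (Cardinal.mk_le_mk_of_subset hsubE) hEsmall)
        (not_le.2 (hK j))
    obtain ⟨β, hβ1, hβ2⟩ := hne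
    refine ⟨β, hβ1, ?_, ?_⟩
    · intro hβα; exact hβ2 (hβα ▸ Set.mem_insert _ _)
    · intro j' hj' hβg
      exact hβ2 (Set.mem_insert_iff.2 (Or.inr ⟨⟨j', hj'⟩, hβg.symm⟩))
  let f : κ.ord.ToType → (Order.succ κ).ord.ToType :=
    (wellFounded_lt).fix (fun j g => (hrec j g).choose)
  have hfix : ∀ j, f j = (hrec j (fun j' _ => f j')).choose := fun j =>
    WellFounded.fix_eq _ _ j
  have hfs : ∀ j, τ (f j) j = τ αs j ∧ f j ≠ αs ∧ ∀ j' (h : j' < j), f j ≠ f j' := by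
    intro j
    rw [hfix j]
    exact (hrec j (fun j' _ => f j')).choose_spec
  have hinj : Function.Injective f := by
    intro a b hab
    by_contra hne
    rcases lt_or_gt_of_ne hne with h | h
    · exact (hfs b).2.2 a h hab.symm
    · exact (hfs a).2.2 b h hab
  refine ⟨Set.range f, ?_, ?_, αs, ?_, ?_⟩
  · rw [Cardinal.mk_range_eq _ hinj, hmkC]
  · -- the intersection is in the product filter
    obtain ⟨c0⟩ := hCne
    obtain ⟨W, hW, hWsub⟩ := GalvinAux.main hκ n F π hpp X s hXF
      hs (wellFounded_lt.min Set.univ ⟨c0, trivial⟩)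
      (fun j => Y (f j)) (Y αs) (fun j => hY (f j)) (hY αs)
      (fun j _ => congrArg Prod.fst ((hfs j).1))
    refine memStarProd_mono n F W _ ?_ hW
    intro a ha
    refine Set.mem_iInter₂.2 ?_
    rintro i ⟨j, rfl⟩
    refine hWsub j ?_ ha
    by_contra hlt
    exact wellFounded_lt.not_lt_min Set.univ trivial (not_le.1 hlt)
  · -- αs is not in the range
    rintro ⟨j, hj⟩
    exact (hfs j).2.1 hj
  · -- covering finite subsets of Z αs
    intro t ht htsub
    obtain ⟨j, hj⟩ := ht.bddAbove
    refine ⟨f j, ⟨j, rfl⟩, ?_⟩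
    intro x hx
    have hx1 : x ∈ Z αs ∩ Set.Iic j := ⟨htsub hx, hj hx⟩
    have := congrArg Prod.snd ((hfs j).1)
    simp only [hτ] at this
    rw [← this] at hx1
    exact hx1.1
end

section
/- Let T be a measure-fat tree on cardinals θ₁ ≤ θ₂ ≤ … ≤ θₙ with ultrafilter assignment t ↦ W_t, and let f : mb(T) → B be a function into an arbitrary set B. Then there exist a measure-one-splitting subtree T' ⊆ T and a set of coordinates I ⊆ {1,…,n} such that for all maximal branches t, t' ∈ mb(T'): t↾I = t'↾I if and only if f(t) = f(t'). -/
open Cardinal Set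

/-- A measure-fat tree on `θ 0 ≤ θ 1 ≤ … ≤ θ (n-1)`: a prefix-closed set of finite
sequences of ordinals (the `i`-th entry below `θ i`) of length at most `n`, containing the
empty sequence, together with an assignment of a normal ultrafilter on `θ k` to every node
of length `k < n` such that the set of successors of that node is measure one. -/
structure MeasureFatTree (n : ℕ) (θ : Fin n → Cardinal) where
  tree : Set (List Ordinal)
  ultra : List Ordinal → Ultrafilter Ordinal
  nil_mem : ([] : List Ordinal) ∈ tree
  prefix_closed : ∀ s t : List Ordinal, t ∈ tree → s <+: t → s ∈ tree
  length_le : ∀ t ∈ tree, t.length ≤ n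
  bounded : ∀ t ∈ tree, ∀ i : Fin n, ∀ h : (i : ℕ) < t.length,
    t.get ⟨(i : ℕ), h⟩ < (θ i).ord
  normal : ∀ t ∈ tree, ∀ h : t.length < n,
    IsNormalUltrafilterOn (θ ⟨t.length, h⟩) (ultra t)
  succ_mem : ∀ t ∈ tree, t.length < n → {a : Ordinal | t ++ [a] ∈ tree} ∈ ultra t

/-- The maximal branches of a measure-fat tree: its nodes of length `n`. -/
def MeasureFatTree.mb {n : ℕ} {θ : Fin n → Cardinal} (T : MeasureFatTree n θ) :
    Set (List Ordinal) :=
  {t | t ∈ T.tree ∧ t.length = n}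

/-- `S` is a measure-one-splitting subtree of `T`: a subset of `T` which is itself a
measure-fat tree with the inherited ultrafilter assignment. -/
def MeasureFatTree.IsMOSubtree {n : ℕ} {θ : Fin n → Cardinal}
    (T : MeasureFatTree n θ) (S : Set (List Ordinal)) : Prop :=
  S ⊆ T.tree ∧ ([] : List Ordinal) ∈ S ∧
  (∀ s t : List Ordinal, t ∈ S → s <+: t → s ∈ S) ∧
  (∀ t ∈ S, t.length < n → {a : Ordinal | t ++ [a] ∈ S} ∈ T.ultra t)

/-! ### Auxiliary lemmas for the proof of `important_coordinates` -/

section ImpCoordAux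

private theorem umem_univ {α : Type*} {U : Ultrafilter α} : (Set.univ : Set α) ∈ U :=
  Filter.univ_mem

private theorem umem_mono {α : Type*} {U : Ultrafilter α} {s t : Set α}
    (h : s ∈ U) (hsub : s ⊆ t) : t ∈ U := Filter.mem_of_superset h hsub

private theorem umem_inter {α : Type*} {U : Ultrafilter α} {s t : Set α}
    (h : s ∈ U) (h' : t ∈ U) : s ∩ t ∈ U := Filter.inter_mem h h'

/-- Pressing-down (Fodor for normal ultrafilters): a regressive function on a
measure-one set is constant on a measure-one set. -/
private theorem pressing {θ : Cardinal} {U : Ultrafilter Ordinal}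
    (hU : IsNormalUltrafilterOn θ U) {A : Set Ordinal} (hA : A ∈ U)
    (g : Ordinal → Ordinal) (hg : ∀ a ∈ A, g a < a) :
    ∃ c, {a | a ∈ A ∧ g a = c} ∈ U := by
  by_contra h
  push_neg at h
  have h1 : ∀ c : Ordinal, {a : Ordinal | g a ≠ c} ∈ U := by
    intro c
    have h2 : {a : Ordinal | g a = c} ∉ U := fun hc =>
      h c (umem_mono (umem_inter hA hc) fun a ha => ⟨ha.1, ha.2⟩)
    have h3 := Ultrafilter.compl_mem_iff_notMem.2 h2
    exact umem_mono h3 fun a ha => ha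
  have hD := hU.2.2.2 (fun ξ => {a | g a ≠ ξ}) (fun ξ _ => h1 ξ)
  obtain ⟨b, hb1, hb2⟩ := Ultrafilter.nonempty_of_mem (umem_inter hD hA)
  exact hb1.2 (g b) (hg b hb2) rfl

/-- Iterated pressing-down for list-valued regressive functions. -/
private theorem pressingList {θ : Cardinal} {U : Ultrafilter Ordinal}
    (hU : IsNormalUltrafilterOn θ U) :
    ∀ (m : ℕ) (A : Set Ordinal), A ∈ U → ∀ g : Ordinal → List Ordinal,
      (∀ a ∈ A, (g a).length = m) → (∀ a ∈ A, ∀ x ∈ g a, x < a) →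
      ∃ L, {a | a ∈ A ∧ g a = L} ∈ U := by
  intro m
  induction m with
  | zero =>
    intro A hA g hlen _
    exact ⟨[], umem_mono hA fun a ha =>
      ⟨ha, List.eq_nil_of_length_eq_zero (hlen a ha)⟩⟩
  | succ k ih =>
    intro A hA g hlen hreg
    have hne : ∀ a ∈ A, g a ≠ [] := by
      intro a ha h0
      have := hlen a ha
      rw [h0] at this
      simp at this
    obtain ⟨c, hc⟩ := pressing hU hA
      (fun a => if h : g a = [] then 0 else (g a).head h)
      (fun a ha => by
        rw [dif_neg (hne a ha)]
        exact hreg a ha _ (List.head_mem (hne a ha)))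
    obtain ⟨L, hL⟩ := ih _ hc (fun a => (g a).tail)
      (fun a ha => by
        have := hlen a ha.1
        simp [List.length_tail, this])
      (fun a ha x hx => hreg a ha.1 x (List.mem_of_mem_tail hx))
    refine ⟨c :: L, umem_mono hL fun a ha => ?_⟩
    obtain ⟨⟨haA, hhead⟩, htail⟩ := ha
    refine ⟨haA, ?_⟩
    have h0 := hne a haA
    rw [dif_neg h0] at hhead
    calc g a = (g a).head h0 :: (g a).tail := (List.cons_head_tail h0).symm
    _ = c :: L := by rw [htail, hhead]

/-- In a normal ultrafilter on `θ`, the set of ordinals above any fixed `x < θ.ord` is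
measure one. -/
private theorem largeTail {θ : Cardinal} {U : Ultrafilter Ordinal}
    (hU : IsNormalUltrafilterOn θ U) (hθ : ℵ₀ < θ) {x : Ordinal} (hx : x < θ.ord) :
    {a : Ordinal | x < a} ∈ U := by
  have hlim := Cardinal.isSuccLimit_ord hθ.le
  have hx1 : x + 1 < θ.ord := by
    rw [Ordinal.add_one_eq_succ]; exact hlim.succ_lt hx
  have h2 := hU.2.2.1 (x + 1) hx1 (fun ξ => ({ξ}ᶜ : Set Ordinal)) (fun ξ _ => hU.2.1 ξ)
  refine umem_mono h2 fun a ha => ?_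
  simp only [Set.mem_iInter, Set.mem_compl_iff, Set.mem_singleton_iff, Set.mem_Iio] at ha
  show x < a
  by_contra hle
  push_neg at hle
  refine ha a ?_ rfl
  calc a ≤ x := hle
  _ < x + 1 := by rw [Ordinal.add_one_eq_succ]; exact Order.lt_succ x

private theorem list_forall_mem {U : Ultrafilter Ordinal} (t : List Ordinal)
    (P : Ordinal → Ordinal → Prop) (h : ∀ x ∈ t, {a | P x a} ∈ U) :
    {a | ∀ x ∈ t, P x a} ∈ U := by
  induction t with
  | nil => exact umem_mono umem_univ (by intro a _ x hx; simp at hx)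
  | cons y t ih =>
    have h1 := h y (List.mem_cons_self (a := y) (l := t))
    have h2 := ih fun x hx => h x (List.mem_cons_of_mem y hx)
    refine umem_mono (umem_inter h1 h2) ?_
    rintro a ⟨ha1, ha2⟩ x hx
    rcases List.mem_cons.1 hx with rfl | hx
    · exact ha1
    · exact ha2 x hx

private theorem three_mem {U : Ultrafilter Ordinal}
    (hU : ∀ x : Ordinal, ({x} : Set Ordinal)ᶜ ∈ U) {A : Set Ordinal} (hA : A ∈ U) :
    ∃ a b c, a ∈ A ∧ b ∈ A ∧ c ∈ A ∧ a ≠ b ∧ a ≠ c ∧ b ≠ c := by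
  obtain ⟨a, ha⟩ := Ultrafilter.nonempty_of_mem hA
  obtain ⟨b, hb⟩ := Ultrafilter.nonempty_of_mem (umem_inter hA (hU a))
  obtain ⟨c, hc⟩ := Ultrafilter.nonempty_of_mem (umem_inter (umem_inter hA (hU a)) (hU b))
  simp only [Set.mem_inter_iff, Set.mem_compl_iff, Set.mem_singleton_iff] at hb hc
  exact ⟨a, b, c, ha, hb.1, hc.1.1, fun h => hb.2 h.symm, fun h => hc.1.2 h.symm,
    fun h => hc.2 h.symm⟩

variable {n : ℕ} {θ : Fin n → Cardinal}

/-- The entries of a node of a measure-fat tree are bounded by the local cardinal, so the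
set of successor ordinals above all of them is measure one. -/
private theorem aboveEntries (T : MeasureFatTree n θ)
    (hθ : ∀ i, ℵ₀ < θ i) (hmono : Monotone θ)
    {t : List Ordinal} (ht : t ∈ T.tree) (hlt : t.length < n) :
    {a : Ordinal | ∀ x ∈ t, x < a} ∈ T.ultra t := by
  have hnorm := T.normal t ht hlt
  apply list_forall_mem
  intro x hx
  obtain ⟨i, hi⟩ := List.mem_iff_get.1 hx
  have hb := T.bounded t ht ⟨(i : ℕ), lt_of_lt_of_le i.isLt (T.length_le t ht)⟩ i.isLt
  apply largeTail hnorm (hθ _)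
  rw [← hi]
  exact lt_of_lt_of_le (by exact hb)
    (Cardinal.ord_le_ord.2 (hmono (Fin.mk_le_mk.2 i.isLt.le)))

/-- Realize a measure-one-splitting subtree as a measure-fat tree. -/
private def MeasureFatTree.ofSub (T : MeasureFatTree n θ) (S : Set (List Ordinal))
    (h : T.IsMOSubtree S) : MeasureFatTree n θ where
  tree := S
  ultra := T.ultra
  nil_mem := h.2.1
  prefix_closed := h.2.2.1
  length_le := fun t ht => T.length_le t (h.1 ht)
  bounded := fun t ht => T.bounded t (h.1 ht)
  normal := fun t ht => T.normal t (h.1 ht)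
  succ_mem := fun t ht hl => h.2.2.2 t ht hl

private theorem MOSub_trans {T : MeasureFatTree n θ} {S S' : Set (List Ordinal)}
    (h : T.IsMOSubtree S) (h' : (T.ofSub S h).IsMOSubtree S') : T.IsMOSubtree S' :=
  ⟨fun u hu => h.1 (h'.1 hu), h'.2.1, h'.2.2.1, h'.2.2.2⟩

/-- The truncation of a measure-fat tree of height `m+1` to height `m`. -/
private def MeasureFatTree.trunc {m : ℕ} {θ : Fin (m + 1) → Cardinal}
    (T : MeasureFatTree (m + 1) θ) :
    MeasureFatTree m (fun i => θ i.castSucc) where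
  tree := {t | t ∈ T.tree ∧ t.length ≤ m}
  ultra := T.ultra
  nil_mem := ⟨T.nil_mem, by simp⟩
  prefix_closed := fun s t ht hs =>
    ⟨T.prefix_closed s t ht.1 hs, le_trans hs.length_le ht.2⟩
  length_le := fun t ht => ht.2
  bounded := fun t ht i h => by
    exact T.bounded t ht.1 i.castSucc h
  normal := fun t ht h => by
    exact T.normal t ht.1 (Nat.lt_succ_of_lt h)
  succ_mem := fun t ht h => by
    have h2 := T.succ_mem t ht.1 (Nat.lt_succ_of_lt h)
    refine umem_mono h2 fun a ha => ⟨ha, ?_⟩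
    simp only [List.length_append, List.length_singleton]
    omega

private def liftSet (S₂ : Set (List Ordinal)) (Z : List Ordinal → Set Ordinal) (m : ℕ) :
    Set (List Ordinal) :=
  S₂ ∪ {u | ∃ t a, t ∈ S₂ ∧ t.length = m ∧ a ∈ Z t ∧ u = t ++ [a]}

private theorem lift_sub {m : ℕ} {θ : Fin (m + 1) → Cardinal} (T : MeasureFatTree (m + 1) θ)
    {S₂ : Set (List Ordinal)} (h₂ : T.trunc.IsMOSubtree S₂)
    (Z : List Ordinal → Set Ordinal)
    (hZ : ∀ t ∈ S₂, t.length = m → Z t ∈ T.ultra t)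
    (hZT : ∀ t ∈ S₂, t.length = m → ∀ a ∈ Z t, t ++ [a] ∈ T.tree) :
    T.IsMOSubtree (liftSet S₂ Z m) := by
  have hlen₂ : ∀ t ∈ S₂, t.length ≤ m := fun t ht => (h₂.1 ht).2
  refine ⟨?_, Or.inl h₂.2.1, ?_, ?_⟩
  · rintro u (hu | ⟨t, a, ht, hl, ha, rfl⟩)
    · exact (h₂.1 hu).1
    · exact hZT t ht hl a ha
  · rintro s u (hu | ⟨t, a, ht, hl, ha, rfl⟩) hs
    · exact Or.inl (h₂.2.2.1 s u hu hs)
    · rcases List.prefix_concat_iff.1 hs with rfl | hs'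
      · exact Or.inr ⟨t, a, ht, hl, ha, rfl⟩
      · exact Or.inl (h₂.2.2.1 s t ht hs')
  · rintro t (ht | ⟨t₀, a, ht₀, hl₀, ha, rfl⟩) hlt
    · by_cases hl : t.length = m
      · refine umem_mono (hZ t ht hl) fun a ha => ?_
        exact Or.inr ⟨t, a, ht, hl, ha, rfl⟩
      · have hlt' : t.length < m := lt_of_le_of_ne (hlen₂ t ht) hl
        exact umem_mono (h₂.2.2.2 t ht hlt') fun a ha => Or.inl ha
    · exfalso
      simp only [List.length_append, List.length_singleton] at hlt
      omega

private theorem lift_branch {S₂ : Set (List Ordinal)} {Z : List Ordinal → Set Ordinal}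
    {m : ℕ} (hlen₂ : ∀ t ∈ S₂, t.length ≤ m) {u : List Ordinal}
    (hu : u ∈ liftSet S₂ Z m) (hlenu : u.length = m + 1) :
    ∃ t a, t ∈ S₂ ∧ t.length = m ∧ a ∈ Z t ∧ u = t ++ [a] := by
  rcases hu with hu | h
  · have := hlen₂ u hu; omega
  · exact h

private theorem extend_branch (T : MeasureFatTree n θ)
    {S : Set (List Ordinal)} (h : T.IsMOSubtree S) :
    ∀ (k : ℕ) (t : List Ordinal), t ∈ S → n - t.length ≤ k →
      ∃ u ∈ S, t <+: u ∧ u.length = n := by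
  intro k
  induction k with
  | zero =>
    intro t ht hk
    have hle := T.length_le t (h.1 ht)
    exact ⟨t, ht, List.prefix_refl t, by omega⟩
  | succ k ih =>
    intro t ht hk
    rcases eq_or_lt_of_le (T.length_le t (h.1 ht)) with heq | hlt
    · exact ⟨t, ht, List.prefix_refl t, heq⟩
    · obtain ⟨a, ha⟩ := Ultrafilter.nonempty_of_mem (h.2.2.2 t ht hlt)
      obtain ⟨u, hu, hpre, hlen⟩ := ih (t ++ [a]) ha
        (by simp only [List.length_append, List.length_singleton]; omega)
      exact ⟨u, hu, (List.prefix_append t [a]).trans hpre, hlen⟩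

/-- The strictly increasing nodes form a measure-one-splitting subtree. -/
private theorem incSub (T : MeasureFatTree n θ)
    (hθ : ∀ i, ℵ₀ < θ i) (hmono : Monotone θ) :
    T.IsMOSubtree {t | t ∈ T.tree ∧ t.Pairwise (· < ·)} := by
  refine ⟨fun t ht => ht.1, ⟨T.nil_mem, List.Pairwise.nil⟩, ?_, ?_⟩
  · intro s t ht hs
    exact ⟨T.prefix_closed s t ht.1 hs, List.Pairwise.sublist hs.sublist ht.2⟩
  · intro t ht hlt
    have h1 := T.succ_mem t ht.1 hlt
    have h2 := aboveEntries T hθ hmono ht.1 hlt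
    refine umem_mono (umem_inter h1 h2) ?_
    rintro a ⟨ha1, ha2⟩
    refine ⟨ha1, ?_⟩
    rw [List.pairwise_append]
    refine ⟨ht.2, List.pairwise_singleton _ _, fun x hx y hy => ?_⟩
    simp only [List.mem_singleton] at hy
    subst hy
    exact ha2 x hx

universe uu in
private theorem aux : ∀ (n : ℕ) (θ : Fin n → Cardinal.{uu}), (∀ i, ℵ₀ < θ i) → Monotone θ →
    ∀ (T : MeasureFatTree n θ) (F : List Ordinal.{uu} → Set (List Ordinal.{uu})),
      ∃ S, T.IsMOSubtree S ∧ ∃ I : Set (Fin n),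
        ∀ t ∈ S, t.length = n → ∀ t' ∈ S, t'.length = n →
          ((∀ i ∈ I, t.getD (i : ℕ) 0 = t'.getD (i : ℕ) 0) ↔ F t = F t') := by
  intro n
  induction n with
  | zero =>
    intro θ hθ hmono T F
    refine ⟨{[]}, ⟨?_, rfl, ?_, ?_⟩, ∅, ?_⟩
    · intro s hs
      rw [Set.mem_singleton_iff] at hs
      subst hs
      exact T.nil_mem
    · intro s t ht hs
      rw [Set.mem_singleton_iff] at ht
      subst ht
      rw [Set.mem_singleton_iff]
      exact List.prefix_nil.1 hs
    · intro t _ h0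
      exact absurd h0 (Nat.not_lt_zero _)
    · intro t ht hlt t' ht' hlt'
      rw [Set.mem_singleton_iff] at ht ht'
      subst ht; subst ht'
      constructor
      · intro _; rfl
      · intro _ i hi; exact absurd hi (Set.notMem_empty i)
  | succ m ih =>
    intro θ hθ hmono T F
    classical
    -- Step 0: pass to the subtree of strictly increasing nodes.
    have h₀ := incSub T hθ hmono
    set T₀ := T.ofSub _ h₀ with hT₀def
    have hθ' : ∀ i : Fin m, ℵ₀ < θ i.castSucc := fun i => hθ _
    have hmono' : Monotone (fun i : Fin m => θ i.castSucc) := fun i j hij =>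
      hmono (by exact hij)
    set Ttr := T₀.trunc with hTtrdef
    -- Basic notions about stems (nodes of length m).
    set Cst : List Ordinal → Prop :=
      fun t => ∃ c : Set (List Ordinal), {a | F (t ++ [a]) = c} ∈ T.ultra t with hCstdef
    set V : Ordinal → Set (Set (List Ordinal)) :=
      fun a => {v | ∃ s, s ∈ T.tree ∧ s.length = m + 1 ∧ (∀ x ∈ s, x < a) ∧ F s = v}
      with hVdef
    -- Key lemma: a stem whose fiber map is not a.e. constant a.e. avoids old values.
    have hL1 : ∀ t, t ∈ T.tree → t.length = m → ¬ Cst t →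
        {a | F (t ++ [a]) ∉ V a} ∈ T.ultra t := by
      intro t ht hlen hnc
      by_contra hmem
      have hcpl : {a | F (t ++ [a]) ∈ V a} ∈ T.ultra t := by
        rcases (T.ultra t).mem_or_compl_mem {a | F (t ++ [a]) ∈ V a} with h | h
        · exact h
        · exact absurd (umem_mono h fun a ha => ha) hmem
      set g : Ordinal → List Ordinal := fun a =>
        if h : {s | s ∈ T.tree ∧ s.length = m + 1 ∧ (∀ x ∈ s, x < a) ∧
            F s = F (t ++ [a])}.Nonempty
        then (IsWellFounded.wf (r := WellOrderingRel)).min _ h else [] with hgdef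
      have hgood : ∀ a, F (t ++ [a]) ∈ V a →
          g a ∈ T.tree ∧ (g a).length = m + 1 ∧ (∀ x ∈ g a, x < a) ∧
            F (g a) = F (t ++ [a]) := by
        intro a ha
        simp only [hVdef, Set.mem_setOf_eq] at ha
        have hne : {s | s ∈ T.tree ∧ s.length = m + 1 ∧ (∀ x ∈ s, x < a) ∧
            F s = F (t ++ [a])}.Nonempty := ha
        simp only [hgdef]
        rw [dif_pos hne]
        exact WellFounded.min_mem _ _ hne
      obtain ⟨L, hL⟩ := pressingList (T.normal t ht (by omega)) (m + 1) _ hcpl g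
        (fun a ha => (hgood a ha).2.1) (fun a ha => (hgood a ha).2.2.1)
      refine hnc ⟨F L, umem_mono hL fun a ha => ?_⟩
      have := (hgood a ha.1).2.2.2
      rw [ha.2] at this
      exact this.symm
    -- The canonical reduction function σ on stems.
    set P' : List Ordinal → Ordinal → Set (List Ordinal) :=
      fun t a => {s | s.length = m ∧ (∀ x ∈ s, x < a) ∧ F (s ++ [a]) = F (t ++ [a])}
      with hP'def
    set gσ : List Ordinal → Ordinal → List Ordinal := fun t a =>
      if h : (P' t a).Nonempty
      then (IsWellFounded.wf (r := WellOrderingRel)).min _ h else [] with hgσdef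
    have hP'ne : ∀ t a, t.length = m → (∀ x ∈ t, x < a) → (P' t a).Nonempty := by
      intro t a h1 h2
      refine ⟨t, ?_⟩
      show t.length = m ∧ (∀ x ∈ t, x < a) ∧ F (t ++ [a]) = F (t ++ [a])
      exact ⟨h1, h2, rfl⟩
    have hgσ_mem : ∀ t a, (P' t a).Nonempty → gσ t a ∈ P' t a := by
      intro t a h
      simp only [hgσdef]
      rw [dif_pos h]
      exact WellFounded.min_mem _ _ h
    have hgσ_congr : ∀ t t' a, P' t a = P' t' a → gσ t a = gσ t' a := by
      intro t t' a h
      simp only [hgσdef]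
      rw [h]
    set σ : List Ordinal → List Ordinal := fun t =>
      if h : ∃ L, {a | (∀ x ∈ t, x < a) ∧ gσ t a = L} ∈ T.ultra t
      then h.choose else [] with hσdef
    have hYmem : ∀ t, t ∈ T.tree → t.length = m →
        {a | (∀ x ∈ t, x < a) ∧ gσ t a = σ t} ∈ T.ultra t := by
      intro t ht hlen
      have hA : {a : Ordinal | ∀ x ∈ t, x < a} ∈ T.ultra t :=
        aboveEntries T hθ hmono ht (by omega)
      have hex : ∃ L, {a | (∀ x ∈ t, x < a) ∧ gσ t a = L} ∈ T.ultra t := by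
        obtain ⟨L, hL⟩ := pressingList (T.normal t ht (by omega)) m _ hA (fun a => gσ t a)
          (fun a ha => (hgσ_mem t a (hP'ne t a hlen ha)).1)
          (fun a ha x hx => (hgσ_mem t a (hP'ne t a hlen ha)).2.1 x hx)
        exact ⟨L, umem_mono hL fun a ha => ⟨ha.1, ha.2⟩⟩
      simp only [hσdef]
      rw [dif_pos hex]
      exact hex.choose_spec
    -- The constancy flag, encoded as a set so that the inductive hypothesis applies.
    set FlagSet : List Ordinal → Set (List Ordinal) :=
      fun t => if Cst t then ∅ else Set.univ with hFSdef
    have hFS_iff : ∀ t t', FlagSet t = FlagSet t' → (Cst t ↔ Cst t') := by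
      intro t t' h
      simp only [hFSdef] at h
      by_cases h1 : Cst t <;> by_cases h2 : Cst t'
      · exact iff_of_true h1 h2
      · rw [if_pos h1, if_neg h2] at h
        exact absurd h Set.empty_ne_univ
      · rw [if_neg h1, if_pos h2] at h
        exact absurd h.symm Set.empty_ne_univ
      · exact iff_of_false h1 h2
    -- First application of the IH: homogenize the flag.
    obtain ⟨S₁, hS₁, I₁, hIff₁⟩ := ih (fun i => θ i.castSucc) hθ' hmono' Ttr FlagSet
    have hS₁T : ∀ t ∈ S₁, t ∈ T.tree ∧ t.Pairwise (· < ·) ∧ t.length ≤ m := by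
      intro t ht
      exact ⟨(hS₁.1 ht).1.1, (hS₁.1 ht).1.2, (hS₁.1 ht).2⟩
    have hflag : ∀ t ∈ S₁, t.length = m → ∀ t' ∈ S₁, t'.length = m →
        (Cst t ↔ Cst t') := by
      by_contra hcon
      push_neg at hcon
      obtain ⟨t, ht, hlt, t', ht', hlt', hne⟩ := hcon
      have hne' : ¬ (Cst t ↔ Cst t') := by
        rcases hne with ⟨hx1, hx2⟩ | ⟨hx1, hx2⟩
        · intro hiff; exact hx2 (hiff.1 hx1)
        · intro hiff; exact hx1 (hiff.2 hx2)
      have hFSne : FlagSet t ≠ FlagSet t' := fun h => hne' (hFS_iff t t' h)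
      have hdis : ¬ ∀ i ∈ I₁, t.getD (i : ℕ) 0 = t'.getD (i : ℕ) 0 :=
        fun h => hFSne ((hIff₁ t ht hlt t' ht' hlt').1 h)
      push_neg at hdis
      obtain ⟨i₀, hi₀, _⟩ := hdis
      -- build three branches of S₁ pairwise differing at coordinate i₀
      obtain ⟨w, hw, -, hwlen⟩ := extend_branch Ttr hS₁ m [] hS₁.2.1 (by simp)
      set t₀ := w.take (i₀ : ℕ) with ht₀def
      have ht₀S : t₀ ∈ S₁ := hS₁.2.2.1 t₀ w hw (List.take_prefix _ _)
      have ht₀len : t₀.length = (i₀ : ℕ) := by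
        rw [ht₀def, List.length_take, hwlen]
        exact min_eq_left i₀.isLt.le
      have ht₀lt : t₀.length < m := by rw [ht₀len]; exact i₀.isLt
      have hsucc := hS₁.2.2.2 t₀ ht₀S ht₀lt
      have ht₀T : t₀ ∈ T.tree := (hS₁T t₀ ht₀S).1
      have hnp := (T.normal t₀ ht₀T (by omega)).2.1
      obtain ⟨a₁, a₂, a₃, ha₁, ha₂, ha₃, h12, h13, h23⟩ := three_mem hnp hsucc
      have hext : ∀ a : Ordinal, t₀ ++ [a] ∈ S₁ →
          ∃ u ∈ S₁, u.length = m ∧ u.getD (i₀ : ℕ) 0 = a := by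
        intro a ha
        obtain ⟨u, hu, hpre, hlen⟩ := extend_branch Ttr hS₁ m (t₀ ++ [a]) ha (by omega)
        refine ⟨u, hu, hlen, ?_⟩
        rw [List.getD_eq_getElem _ _ (by rw [hlen]; exact i₀.isLt)]
        have h1 : (i₀ : ℕ) < (t₀ ++ [a]).length := by
          simp only [List.length_append, List.length_singleton, ht₀len]
          omega
        rw [← List.IsPrefix.getElem hpre h1]
        exact List.getElem_concat_length ht₀len.symm h1
      obtain ⟨u₁, hu₁, hl₁, hg₁⟩ := hext a₁ ha₁
      obtain ⟨u₂, hu₂, hl₂, hg₂⟩ := hext a₂ ha₂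
      obtain ⟨u₃, hu₃, hl₃, hg₃⟩ := hext a₃ ha₃
      have hd : ∀ u u', u ∈ S₁ → u.length = m → u' ∈ S₁ → u'.length = m →
          u.getD (i₀ : ℕ) 0 ≠ u'.getD (i₀ : ℕ) 0 → FlagSet u ≠ FlagSet u' := by
        intro u u' h1 h2 h3 h4 h5 heq
        exact h5 ((hIff₁ u h1 h2 u' h3 h4).2 heq i₀ hi₀)
      have h12' := hd u₁ u₂ hu₁ hl₁ hu₂ hl₂ (by rw [hg₁, hg₂]; exact h12)
      have h13' := hd u₁ u₃ hu₁ hl₁ hu₃ hl₃ (by rw [hg₁, hg₃]; exact h13)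
      have h23' := hd u₂ u₃ hu₂ hl₂ hu₃ hl₃ (by rw [hg₂, hg₃]; exact h23)
      have hval : ∀ u, FlagSet u = ∅ ∨ FlagSet u = Set.univ := by
        intro u
        simp only [hFSdef]
        by_cases h : Cst u
        · left; rw [if_pos h]
        · right; rw [if_neg h]
      rcases hval u₁ with e1 | e1 <;> rcases hval u₂ with e2 | e2 <;>
          rcases hval u₃ with e3 | e3 <;>
        first
          | exact h12' (e1.trans e2.symm)
          | exact h13' (e1.trans e3.symm)
          | exact h23' (e2.trans e3.symm)
    -- pick a base stem to determine the flag's constant value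
    obtain ⟨tb, htb, -, htblen⟩ := extend_branch Ttr hS₁ m [] hS₁.2.1 (by simp)
    set T₁ := Ttr.ofSub S₁ hS₁ with hT₁def
    by_cases hcase : Cst tb
    · -- Case A: every stem has an a.e.-constant fiber map.
      have hallC : ∀ t ∈ S₁, t.length = m → Cst t :=
        fun t ht hl => (hflag t ht hl tb htb htblen).2 hcase
      set cF : List Ordinal → Set (List Ordinal) :=
        fun t => if h : Cst t then h.choose else ∅ with hcFdef
      obtain ⟨S₂, hS₂, I₂, hIff₂⟩ := ih (fun i => θ i.castSucc) hθ' hmono' T₁ cF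
      have hS₂tr : Ttr.IsMOSubtree S₂ := MOSub_trans hS₁ hS₂
      have hS₂T : ∀ t ∈ S₂, t ∈ T.tree ∧ t.Pairwise (· < ·) ∧ t.length ≤ m := by
        intro t ht
        exact ⟨(hS₂tr.1 ht).1.1, (hS₂tr.1 ht).1.2, (hS₂tr.1 ht).2⟩
      set Z : List Ordinal → Set Ordinal := fun t =>
        {a | t ++ [a] ∈ T.tree ∧ (∀ x ∈ t, x < a) ∧ F (t ++ [a]) = cF t} with hZdef
      have hZmem : ∀ t ∈ S₂, t.length = m → Z t ∈ T.ultra t := by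
        intro t ht hl
        have hC := hallC t (hS₂.1 ht) hl
        have h1 := T.succ_mem t (hS₂T t ht).1 (by omega)
        have h1' := aboveEntries T hθ hmono (hS₂T t ht).1 (by omega)
        have h2 : {a | F (t ++ [a]) = cF t} ∈ T.ultra t := by
          simp only [hcFdef]
          rw [dif_pos hC]
          exact hC.choose_spec
        refine umem_mono (umem_inter (umem_inter h1 h1') h2) ?_
        rintro a ⟨⟨x1, x2⟩, x3⟩
        exact ⟨x1, x2, x3⟩
      have hZT₀ : ∀ t ∈ S₂, t.length = m → ∀ a ∈ Z t, t ++ [a] ∈ T₀.tree := by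
        intro t ht hl a ha
        refine ⟨ha.1, ?_⟩
        rw [List.pairwise_append]
        refine ⟨(hS₂T t ht).2.1, List.pairwise_singleton _ _, fun x hx y hy => ?_⟩
        simp only [List.mem_singleton] at hy
        subst hy
        exact ha.2.1 x hx
      have hlift := lift_sub T₀ hS₂tr Z hZmem hZT₀
      refine ⟨liftSet S₂ Z m, MOSub_trans h₀ hlift,
        (fun j : Fin m => j.castSucc) '' I₂, ?_⟩
      intro u hu hul u' hu' hul'
      obtain ⟨t, a, ht, htl, haZ, rfl⟩ :=
        lift_branch (fun t ht => (hS₂tr.1 ht).2) hu hul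
      obtain ⟨t', a', ht', htl', haZ', rfl⟩ :=
        lift_branch (fun t ht => (hS₂tr.1 ht).2) hu' hul'
      have hstem := hIff₂ t ht htl t' ht' htl'
      have hFu : F (t ++ [a]) = cF t := haZ.2.2
      have hFu' : F (t' ++ [a']) = cF t' := haZ'.2.2
      constructor
      · intro hag
        rw [hFu, hFu']
        refine hstem.1 fun j hj => ?_
        have h5 := hag j.castSucc ⟨j, hj, rfl⟩
        rwa [Fin.coe_castSucc,
          List.getD_append _ _ _ _ (by rw [htl]; exact j.isLt),
          List.getD_append _ _ _ _ (by rw [htl']; exact j.isLt)] at h5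
      · intro hFeq
        have hc : cF t = cF t' := by rw [← hFu, ← hFu', hFeq]
        have hag₂ := hstem.2 hc
        rintro i ⟨j, hj, rfl⟩
        have h5 := hag₂ j hj
        rw [Fin.coe_castSucc,
          List.getD_append _ _ _ _ (by rw [htl]; exact j.isLt),
          List.getD_append _ _ _ _ (by rw [htl']; exact j.isLt)]
        exact h5
    · -- Case B: no stem has an a.e.-constant fiber map.
      have hallNC : ∀ t ∈ S₁, t.length = m → ¬ Cst t :=
        fun t ht hl hC => hcase ((hflag t ht hl tb htb htblen).1 hC)
      obtain ⟨S₂, hS₂, I₂, hIff₂⟩ := ih (fun i => θ i.castSucc) hθ' hmono' T₁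
        (fun t => ({σ t} : Set (List Ordinal)))
      have hS₂tr : Ttr.IsMOSubtree S₂ := MOSub_trans hS₁ hS₂
      have hS₂T : ∀ t ∈ S₂, t ∈ T.tree ∧ t.Pairwise (· < ·) ∧ t.length ≤ m := by
        intro t ht
        exact ⟨(hS₂tr.1 ht).1.1, (hS₂tr.1 ht).1.2, (hS₂tr.1 ht).2⟩
      set Z : List Ordinal → Set Ordinal := fun t =>
        {a | t ++ [a] ∈ T.tree ∧ (∀ x ∈ t, x < a) ∧ gσ t a = σ t ∧
          F (t ++ [a]) ∉ V a} with hZdef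
      have hZmem : ∀ t ∈ S₂, t.length = m → Z t ∈ T.ultra t := by
        intro t ht hl
        have h1 := T.succ_mem t (hS₂T t ht).1 (by omega)
        have h2 := hYmem t (hS₂T t ht).1 hl
        have h3 := hL1 t (hS₂T t ht).1 hl (hallNC t (hS₂.1 ht) hl)
        refine umem_mono (umem_inter (umem_inter h1 h2) h3) ?_
        rintro a ⟨⟨x1, x2⟩, x3⟩
        exact ⟨x1, x2.1, x2.2, x3⟩
      have hZT₀ : ∀ t ∈ S₂, t.length = m → ∀ a ∈ Z t, t ++ [a] ∈ T₀.tree := by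
        intro t ht hl a ha
        refine ⟨ha.1, ?_⟩
        rw [List.pairwise_append]
        refine ⟨(hS₂T t ht).2.1, List.pairwise_singleton _ _, fun x hx y hy => ?_⟩
        simp only [List.mem_singleton] at hy
        subst hy
        exact ha.2.1 x hx
      have hlift := lift_sub T₀ hS₂tr Z hZmem hZT₀
      have hgetlast : ∀ (s : List Ordinal) (b : Ordinal), s.length = m →
          (s ++ [b]).getD m 0 = b := by
        intro s b hsl
        rw [List.getD_eq_getElem _ _
          (by simp only [List.length_append, List.length_singleton]; omega)]
        exact List.getElem_concat_length hsl.symm _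
      -- the cross-collision killer
      have key : ∀ s b s' b', s ∈ S₂ → s.length = m → b ∈ Z s →
          s' ∈ S₂ → s'.length = m → b' ∈ Z s' → b < b' →
          F (s ++ [b]) ≠ F (s' ++ [b']) := by
        intro s b s' b' hs hsl hb hs' hsl' hb' hbb heq
        refine hb'.2.2.2 ?_
        rw [← heq]
        simp only [hVdef, Set.mem_setOf_eq]
        refine ⟨s ++ [b], hb.1,
          by simp only [List.length_append, List.length_singleton]; omega, ?_, rfl⟩
        intro x hx
        rcases List.mem_append.1 hx with hx | hx
        · exact lt_trans (hb.2.1 x hx) hbb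
        · simp only [List.mem_singleton] at hx
          subst hx
          exact hbb
      refine ⟨liftSet S₂ Z m, MOSub_trans h₀ hlift,
        insert (Fin.last m) ((fun j : Fin m => j.castSucc) '' I₂), ?_⟩
      intro u hu hul u' hu' hul'
      obtain ⟨t, a, ht, htl, haZ, rfl⟩ :=
        lift_branch (fun t ht => (hS₂tr.1 ht).2) hu hul
      obtain ⟨t', a', ht', htl', haZ', rfl⟩ :=
        lift_branch (fun t ht => (hS₂tr.1 ht).2) hu' hul'
      have hstem := hIff₂ t ht htl t' ht' htl'
      constructor
      · intro hag
        have hlast := hag (Fin.last m) (Set.mem_insert _ _)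
        rw [show ((Fin.last m : Fin (m + 1)) : ℕ) = m from rfl, hgetlast t a htl,
          hgetlast t' a' htl'] at hlast
        subst hlast
        have hI₂ : ∀ j ∈ I₂, t.getD (j : ℕ) 0 = t'.getD (j : ℕ) 0 := by
          intro j hj
          have h5 := hag j.castSucc (Set.mem_insert_of_mem _ ⟨j, hj, rfl⟩)
          rwa [Fin.coe_castSucc,
            List.getD_append _ _ _ _ (by rw [htl]; exact j.isLt),
            List.getD_append _ _ _ _ (by rw [htl']; exact j.isLt)] at h5
        have hσeq : σ t = σ t' := Set.singleton_eq_singleton_iff.1 (hstem.1 hI₂)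
        have hg1 := hgσ_mem t a (hP'ne t a htl haZ.2.1)
        have hg2 := hgσ_mem t' a (hP'ne t' a htl' haZ'.2.1)
        simp only [hP'def, Set.mem_setOf_eq] at hg1 hg2
        have hgg : gσ t a = gσ t' a := by
          rw [haZ.2.2.1, haZ'.2.2.1, hσeq]
        rw [← hg1.2.2, hgg, hg2.2.2]
      · intro hFeq
        have haa : a = a' := by
          rcases lt_trichotomy a a' with hlt | hq | hgt
          · exact absurd hFeq (key t a t' a' ht htl haZ ht' htl' haZ' hlt)
          · exact hq
          · exact absurd hFeq.symm (key t' a' t a ht' htl' haZ' ht htl haZ hgt)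
        subst haa
        have hPP : P' t a = P' t' a := by
          simp only [hP'def]
          rw [hFeq]
        have hσeq : σ t = σ t' := by
          rw [← haZ.2.2.1, ← haZ'.2.2.1]
          exact hgσ_congr t t' a hPP
        intro i hi
        rcases Set.mem_insert_iff.1 hi with rfl | hmem
        · rw [show ((Fin.last m : Fin (m + 1)) : ℕ) = m from rfl, hgetlast t a htl,
            hgetlast t' a htl']
        · obtain ⟨j, hj, rfl⟩ := hmem
          have h5 := hstem.2 (by rw [hσeq]) j hj
          rw [Fin.coe_castSucc,
            List.getD_append _ _ _ _ (by rw [htl]; exact j.isLt),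
            List.getD_append _ _ _ _ (by rw [htl']; exact j.isLt)]
          exact h5

end ImpCoordAux

/-- **Important coordinates.** For every measure-fat tree `T` on uncountable cardinals
`θ 0 ≤ … ≤ θ (n-1)` and every function `f` on the maximal branches of `T` into an
arbitrary set `B`, there are a measure-one-splitting subtree `S ⊆ T` and a set of
coordinates `I ⊆ {0,…,n-1}` such that for all maximal branches `t, t'` of `S`:
`t ↾ I = t' ↾ I` if and only if `f t = f t'`. -/
theorem important_coordinates
    {B : Type*} (n : ℕ) (hn : 1 ≤ n) (θ : Fin n → Cardinal)
    (hθ : ∀ i, ℵ₀ < θ i) (hmono : Monotone θ)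
    (T : MeasureFatTree n θ) (f : List Ordinal → B) :
    ∃ S : Set (List Ordinal), T.IsMOSubtree S ∧
      ∃ I : Set (Fin n),
        ∀ t ∈ S, t.length = n → ∀ t' ∈ S, t'.length = n →
          ((∀ i ∈ I, t.getD (i : ℕ) 0 = t'.getD (i : ℕ) 0) ↔ f t = f t') := by
  obtain ⟨S, hS, I, hI⟩ := aux n θ hθ hmono T (fun t => f ⁻¹' {f t})
  refine ⟨S, hS, I, fun t ht hl t' ht' hl' => ?_⟩
  rw [hI t ht hl t' ht' hl']
  constructor
  · intro h
    have ht2 : t ∈ f ⁻¹' {f t} := by simp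
    rw [h] at ht2
    simpa using ht2
  · intro h
    rw [h]
end

section
/- Let κ be an infinite cardinal with 2^{<κ} = κ. Let ⟨X_i : i < κ⁺⟩ and ⟨Z_i : i < κ⁺⟩ be sequences of subsets of κ. For α < κ⁺, ξ < κ and a finite set ν⃗ of ordinals below κ, put H_{α,ξ,ν⃗} = {i < κ⁺ : X_i ∩ ξ = X_α ∩ ξ and ν⃗ ⊆ Z_i}. Then there exists α* < κ⁺ such that for every ξ < κ and every finite ν⃗ ⊆ Z_{α*}, the set H_{α*,ξ,ν⃗} has cardinality κ⁺. -/
open Cardinal Set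

/-- Let `κ` be an infinite cardinal with `2^{<κ} = κ`, and let `⟨X i : i < κ⁺⟩` and
`⟨Z i : i < κ⁺⟩` be sequences of subsets of `κ`. Then there is `α* < κ⁺` such that for
every `ξ < κ` and every finite `ν ⊆ Z α*`, the set
`H = {i < κ⁺ : X i ∩ ξ = X α* ∩ ξ and ν ⊆ Z i}` has cardinality `κ⁺`. -/
theorem exists_index_with_large_agreement_sets
    (κ : Cardinal) (hκ : ℵ₀ ≤ κ)
    (h2 : ∀ ν : Cardinal, ν < κ → (2 : Cardinal) ^ ν ≤ κ)
    (X Z : (Order.succ κ).ord.ToType → Set κ.ord.ToType) :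
    ∃ αs : (Order.succ κ).ord.ToType,
      ∀ ξ : κ.ord.ToType, ∀ ν : Finset κ.ord.ToType, ↑ν ⊆ Z αs →
        #↥{i : (Order.succ κ).ord.ToType |
            X i ∩ Set.Iio ξ = X αs ∩ Set.Iio ξ ∧ ↑ν ⊆ Z i} = Order.succ κ := by
  by_contra hcon
  push_neg at hcon
  choose ξ ν hν hne using hcon
  let T := (Order.succ κ).ord.ToType
  let K := κ.ord.ToType
  have hKcard : #K = κ := Cardinal.mk_ord_toType κ
  have hTcard : #T = Order.succ κ := Cardinal.mk_ord_toType (Order.succ κ)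
  have hKinf : Infinite K := Cardinal.infinite_iff.mpr (by rw [hKcard]; exact hκ)
  -- each witnessed set is small
  have hsmall : ∀ α : T,
      #↥{i : T | X i ∩ Set.Iio (ξ α) = X α ∩ Set.Iio (ξ α) ∧ ↑(ν α) ⊆ Z i} ≤ κ := by
    intro α
    have hle : #↥{i : T | X i ∩ Set.Iio (ξ α) = X α ∩ Set.Iio (ξ α) ∧ ↑(ν α) ⊆ Z i}
        ≤ Order.succ κ := hTcard ▸ Cardinal.mk_set_le _
    rcases lt_or_eq_of_le hle with h | h
    · exact Order.lt_succ_iff.mp h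
    · exact absurd h (hne α)
  -- pattern index type
  let I : Type _ := Σ x : K, Set (Set.Iio x) × Finset K
  let G : I → Set T := fun p =>
    {i : T | ξ i = p.1 ∧ (∀ y : Set.Iio p.1, (y : K) ∈ X i ↔ y ∈ p.2.1) ∧ ν i = p.2.2}
  have hcover : (Set.univ : Set T) ⊆ ⋃ p, G p := by
    intro i _
    exact Set.mem_iUnion.mpr
      ⟨⟨ξ i, ({y : Set.Iio (ξ i) | (y : K) ∈ X i}, ν i)⟩, rfl, fun y => Iff.rfl, rfl⟩
  have hGsmall : ∀ p : I, #(G p) ≤ κ := by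
    intro p
    rcases (G p).eq_empty_or_nonempty with h | ⟨α, hα⟩
    · simp [h]
    · obtain ⟨hα1, hα2, hα3⟩ := hα
      refine le_trans (Cardinal.mk_le_mk_of_subset ?_) (hsmall α)
      rintro i ⟨hi1, hi2, hi3⟩
      constructor
      · rw [hα1]
        ext y
        simp only [Set.mem_inter_iff, Set.mem_Iio]
        constructor
        · rintro ⟨hy, hlt⟩
          exact ⟨(hα2 ⟨y, hlt⟩).mpr ((hi2 ⟨y, hlt⟩).mp hy), hlt⟩
        · rintro ⟨hy, hlt⟩
          exact ⟨(hi2 ⟨y, hlt⟩).mpr ((hα2 ⟨y, hlt⟩).mp hy), hlt⟩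
      · rw [hα3, ← hi3]
        exact hν i
  have hI : #I ≤ κ := by
    have h1 : #I = Cardinal.sum fun x : K => #(Set (Set.Iio x) × Finset K) :=
      Cardinal.mk_sigma _
    have h2' : ∀ x : K, #(Set (Set.Iio x) × Finset K) ≤ κ := by
      intro x
      rw [Cardinal.mk_prod, Cardinal.lift_id, Cardinal.lift_id, Cardinal.mk_set,
        Cardinal.mk_finset_of_infinite, hKcard]
      calc (2 : Cardinal) ^ #(Set.Iio x) * κ ≤ κ * κ := by
            have := h2 _ (Cardinal.mk_Iio_ord_toType x)
            gcongr
        _ = κ := Cardinal.mul_eq_self hκ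
    calc #I = Cardinal.sum fun x : K => #(Set (Set.Iio x) × Finset K) := h1
      _ ≤ Cardinal.sum fun _ : K => κ := Cardinal.sum_le_sum _ _ h2'
      _ = #K * κ := Cardinal.sum_const' K κ
      _ = κ := by rw [hKcard]; exact Cardinal.mul_eq_self hκ
  have hbig : Order.succ κ ≤ κ := by
    calc Order.succ κ = #T := hTcard.symm
      _ = #(Set.univ : Set T) := (Cardinal.mk_univ (α := T)).symm
      _ ≤ #(⋃ p, G p) := Cardinal.mk_le_mk_of_subset hcover
      _ ≤ Cardinal.sum fun p : I => #(G p) := Cardinal.mk_iUnion_le_sum_mk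
      _ ≤ Cardinal.sum fun _ : I => κ := Cardinal.sum_le_sum _ _ hGsmall
      _ = #I * κ := Cardinal.sum_const' I κ
      _ ≤ κ * κ := by gcongr
      _ = κ := Cardinal.mul_eq_self hκ
  exact absurd hbig (Order.lt_succ κ).not_ge
end
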